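/- Let c ∈ (−1,1), a = √((1+c)/2), b = √((1−c)/2), let A11, A12, A13, A22, A23, A33 be real numbers, and set H12 = A11*A22 − A12², H13 = A11*A33 − A13², H23 = A22*A33 − A23², K = A11*A22*A33 + 2*A12*A13*A23 − A11*A23² − A22*A13² − A33*A12², and ρ = 2(H12 + H13 + H23) − 2c. Define D : ℝ → ℝ by D(l) = (1 − l*A11)·cos(a*l)·cosh(b*l) + (−A22 + l*H12)·(sin(a*l)/a)·cosh(b*l) + (−A33 + l*H13)·cos(a*l)·(sinh(b*l)/b) + (H23 − l*K)·(sin(a*l)/a)·(sinh(b*l)/b). Then the tenth derivative of D at 0 equals (128c⁴ − 80c³ − 96c² + 40c + 8)·H12 + (128c⁴ + 80c³ − 96c² − 40c + 8)·H13 + (16c⁴ − 12c² + 1)·ρ + 16c⁵ − 4c³ − 3c. -/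

import Mathlib

set_option maxHeartbeats 4000000


noncomputable def Fm (a b p0 p1 q0 q1 r0 r1 s0 s1 : ℝ) : ℝ → ℝ := fun l =>
  (p0 + p1*l) * Real.cos (a*l) * Real.cosh (b*l)
  + (q0 + q1*l) * (Real.sin (a*l)/a) * Real.cosh (b*l)
  + (r0 + r1*l) * Real.cos (a*l) * (Real.sinh (b*l)/b)
  + (s0 + s1*l) * (Real.sin (a*l)/a) * (Real.sinh (b*l)/b)

lemma stepF' (a b : ℝ) (ha : a ≠ 0) (hb : b ≠ 0)
    (p0 p1 q0 q1 r0 r1 s0 s1 P0 P1 Q0 Q1 R0 R1 S0 S1 : ℝ)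
    (h1 : P0 = p1 + q0 + r0) (h2 : P1 = q1 + r1)
    (h3 : Q0 = q1 - a^2*p0 + s0) (h4 : Q1 = -(a^2)*p1 + s1)
    (h5 : R0 = r1 + b^2*p0 + s0) (h6 : R1 = b^2*p1 + s1)
    (h7 : S0 = s1 + b^2*q0 - a^2*r0) (h8 : S1 = b^2*q1 - a^2*r1) :
    deriv (Fm a b p0 p1 q0 q1 r0 r1 s0 s1) = Fm a b P0 P1 Q0 Q1 R0 R1 S0 S1 := by
  subst h1 h2 h3 h4 h5 h6 h7 h8
  funext l
  have hid : HasDerivAt (fun x : ℝ => a * x) a l := by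
    simpa using (hasDerivAt_id l).const_mul a
  have hidb : HasDerivAt (fun x : ℝ => b * x) b l := by
    simpa using (hasDerivAt_id l).const_mul b
  have hC : HasDerivAt (fun x : ℝ => Real.cos (a*x)) (-Real.sin (a*l) * a) l :=
    (Real.hasDerivAt_cos (a*l)).comp l hid
  have hS : HasDerivAt (fun x : ℝ => Real.sin (a*x)/a) (Real.cos (a*l) * a / a) l :=
    ((Real.hasDerivAt_sin (a*l)).comp l hid).div_const a
  have hCh : HasDerivAt (fun x : ℝ => Real.cosh (b*x)) (Real.sinh (b*l) * b) l :=
    (Real.hasDerivAt_cosh (b*l)).comp l hidb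
  have hSh : HasDerivAt (fun x : ℝ => Real.sinh (b*x)/b) (Real.cosh (b*l) * b / b) l :=
    ((Real.hasDerivAt_sinh (b*l)).comp l hidb).div_const b
  have hp : HasDerivAt (fun x : ℝ => p0 + p1*x) p1 l := by
    simpa using ((hasDerivAt_id l).const_mul p1).const_add p0
  have hq : HasDerivAt (fun x : ℝ => q0 + q1*x) q1 l := by
    simpa using ((hasDerivAt_id l).const_mul q1).const_add q0
  have hr : HasDerivAt (fun x : ℝ => r0 + r1*x) r1 l := by
    simpa using ((hasDerivAt_id l).const_mul r1).const_add r0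
  have hs : HasDerivAt (fun x : ℝ => s0 + s1*x) s1 l := by
    simpa using ((hasDerivAt_id l).const_mul s1).const_add s0
  have H := (((hp.mul hC).mul hCh).add ((hq.mul hS).mul hCh)).add
      (((hr.mul hC).mul hSh).add ((hs.mul hS).mul hSh))
  have := H.deriv
  simp only [Pi.add_def, Pi.mul_def] at this
  rw [show (fun x : ℝ =>
      (p0 + p1*x) * Real.cos (a*x) * Real.cosh (b*x)
      + (q0 + q1*x) * (Real.sin (a*x)/a) * Real.cosh (b*x)
      + ((r0 + r1*x) * Real.cos (a*x) * (Real.sinh (b*x)/b)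
      + (s0 + s1*x) * (Real.sin (a*x)/a) * (Real.sinh (b*x)/b))) =
      Fm a b p0 p1 q0 q1 r0 r1 s0 s1 from by funext x; simp [Fm]; ring] at this
  rw [this, Fm]
  field_simp
  ring


theorem detQ_tenth_deriv_S2xH2 (c : ℝ) (hc : c ∈ Set.Ioo (-1 : ℝ) 1)
    (a b : ℝ) (ha : a = Real.sqrt ((1 + c)/2)) (hb : b = Real.sqrt ((1 - c)/2))
    (A11 A12 A13 A22 A23 A33 H12 H13 H23 K ρ : ℝ)
    (hH12 : H12 = A11*A22 - A12^2)
    (hH13 : H13 = A11*A33 - A13^2)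
    (hH23 : H23 = A22*A33 - A23^2)
    (hK : K = A11*A22*A33 + 2*A12*A13*A23 - A11*A23^2 - A22*A13^2 - A33*A12^2)
    (hρ : ρ = 2*(H12 + H13 + H23) - 2*c)
    (D : ℝ → ℝ)
    (hD : ∀ l : ℝ, D l =
      (1 - l*A11) * Real.cos (a*l) * Real.cosh (b*l)
      + (-A22 + l*H12) * (Real.sin (a*l)/a) * Real.cosh (b*l)
      + (-A33 + l*H13) * Real.cos (a*l) * (Real.sinh (b*l)/b)
      + (H23 - l*K) * (Real.sin (a*l)/a) * (Real.sinh (b*l)/b)) :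
    iteratedDeriv 10 D 0 =
      (128*c^4 - 80*c^3 - 96*c^2 + 40*c + 8)*H12
      + (128*c^4 + 80*c^3 - 96*c^2 - 40*c + 8)*H13
      + (16*c^4 - 12*c^2 + 1)*ρ + 16*c^5 - 4*c^3 - 3*c := by
  subst hρ hH12 hH13 hH23 hK
  have hc1 : (0:ℝ) < (1 + c)/2 := by have := hc.1; linarith
  have hc2 : (0:ℝ) < (1 - c)/2 := by have := hc.2; linarith
  have ha0 : a ≠ 0 := by rw [ha]; exact ne_of_gt (Real.sqrt_pos.mpr hc1)
  have hb0 : b ≠ 0 := by rw [hb]; exact ne_of_gt (Real.sqrt_pos.mpr hc2)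
  have ha2 : a^2 = (1 + c)/2 := by rw [ha]; exact Real.sq_sqrt hc1.le
  have hb2 : b^2 = (1 - c)/2 := by rw [hb]; exact Real.sq_sqrt hc2.le
  obtain ⟨x0_0, hx0_0⟩ : ∃ x : ℝ, x = ((1:ℝ)) := ⟨_, rfl⟩
  obtain ⟨x0_1, hx0_1⟩ : ∃ x : ℝ, x = ((-1:ℝ)*A11) := ⟨_, rfl⟩
  obtain ⟨x0_2, hx0_2⟩ : ∃ x : ℝ, x = ((-1:ℝ)*A22) := ⟨_, rfl⟩
  obtain ⟨x0_3, hx0_3⟩ : ∃ x : ℝ, x = ((-1:ℝ)*A12^2 + A11*A22) := ⟨_, rfl⟩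
  obtain ⟨x0_4, hx0_4⟩ : ∃ x : ℝ, x = ((-1:ℝ)*A33) := ⟨_, rfl⟩
  obtain ⟨x0_5, hx0_5⟩ : ∃ x : ℝ, x = ((-1:ℝ)*A13^2 + A11*A33) := ⟨_, rfl⟩
  obtain ⟨x0_6, hx0_6⟩ : ∃ x : ℝ, x = ((-1:ℝ)*A23^2 + A22*A33) := ⟨_, rfl⟩
  obtain ⟨x0_7, hx0_7⟩ : ∃ x : ℝ, x = (A13^2*A22 + (-2:ℝ)*A12*A13*A23 + A12^2*A33 + A11*A23^2 + (-1:ℝ)*A11*A22*A33) := ⟨_, rfl⟩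
  obtain ⟨x1_0, hx1_0⟩ : ∃ x : ℝ, x = ((-1:ℝ)*A33 + (-1:ℝ)*A22 + (-1:ℝ)*A11) := ⟨_, rfl⟩
  obtain ⟨x1_1, hx1_1⟩ : ∃ x : ℝ, x = ((-1:ℝ)*A13^2 + (-1:ℝ)*A12^2 + A11*A33 + A11*A22) := ⟨_, rfl⟩
  obtain ⟨x1_2, hx1_2⟩ : ∃ x : ℝ, x = ((-1/2:ℝ) + (-1:ℝ)*A23^2 + A22*A33 + (-1:ℝ)*A12^2 + A11*A22 + (-1/2:ℝ)*c) := ⟨_, rfl⟩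
  obtain ⟨x1_3, hx1_3⟩ : ∃ x : ℝ, x = (A13^2*A22 + (-2:ℝ)*A12*A13*A23 + A12^2*A33 + (1/2:ℝ)*A11 + A11*A23^2 + (-1:ℝ)*A11*A22*A33 + (1/2:ℝ)*c*A11) := ⟨_, rfl⟩
  obtain ⟨x1_4, hx1_4⟩ : ∃ x : ℝ, x = ((1/2:ℝ) + (-1:ℝ)*A23^2 + A22*A33 + (-1:ℝ)*A13^2 + A11*A33 + (-1/2:ℝ)*c) := ⟨_, rfl⟩
  obtain ⟨x1_5, hx1_5⟩ : ∃ x : ℝ, x = (A13^2*A22 + (-2:ℝ)*A12*A13*A23 + A12^2*A33 + (-1/2:ℝ)*A11 + A11*A23^2 + (-1:ℝ)*A11*A22*A33 + (1/2:ℝ)*c*A11) := ⟨_, rfl⟩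
  obtain ⟨x1_6, hx1_6⟩ : ∃ x : ℝ, x = ((1/2:ℝ)*A33 + (-1/2:ℝ)*A22 + A13^2*A22 + (-2:ℝ)*A12*A13*A23 + A12^2*A33 + A11*A23^2 + (-1:ℝ)*A11*A22*A33 + (1/2:ℝ)*c*A33 + (1/2:ℝ)*c*A22) := ⟨_, rfl⟩
  obtain ⟨x1_7, hx1_7⟩ : ∃ x : ℝ, x = ((1/2:ℝ)*A13^2 + (-1/2:ℝ)*A12^2 + (-1/2:ℝ)*A11*A33 + (1/2:ℝ)*A11*A22 + (1/2:ℝ)*c*A13^2 + (1/2:ℝ)*c*A12^2 + (-1/2:ℝ)*c*A11*A33 + (-1/2:ℝ)*c*A11*A22) := ⟨_, rfl⟩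
  obtain ⟨x2_0, hx2_0⟩ : ∃ x : ℝ, x = ((-2:ℝ)*A23^2 + (2:ℝ)*A22*A33 + (-2:ℝ)*A13^2 + (-2:ℝ)*A12^2 + (2:ℝ)*A11*A33 + (2:ℝ)*A11*A22 + (-1:ℝ)*c) := ⟨_, rfl⟩
  obtain ⟨x2_1, hx2_1⟩ : ∃ x : ℝ, x = ((2:ℝ)*A13^2*A22 + (-4:ℝ)*A12*A13*A23 + (2:ℝ)*A12^2*A33 + (2:ℝ)*A11*A23^2 + (-2:ℝ)*A11*A22*A33 + c*A11) := ⟨_, rfl⟩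
  obtain ⟨x2_2, hx2_2⟩ : ∃ x : ℝ, x = (A33 + (2:ℝ)*A13^2*A22 + (-4:ℝ)*A12*A13*A23 + (2:ℝ)*A12^2*A33 + A11 + (2:ℝ)*A11*A23^2 + (-2:ℝ)*A11*A22*A33 + c*A33 + c*A22 + c*A11) := ⟨_, rfl⟩
  obtain ⟨x2_3, hx2_3⟩ : ∃ x : ℝ, x = (A13^2 + (-1:ℝ)*A11*A33 + c*A13^2 + c*A12^2 + (-1:ℝ)*c*A11*A33 + (-1:ℝ)*c*A11*A22) := ⟨_, rfl⟩
  obtain ⟨x2_4, hx2_4⟩ : ∃ x : ℝ, x = ((-1:ℝ)*A22 + (2:ℝ)*A13^2*A22 + (-4:ℝ)*A12*A13*A23 + (2:ℝ)*A12^2*A33 + (-1:ℝ)*A11 + (2:ℝ)*A11*A23^2 + (-2:ℝ)*A11*A22*A33 + c*A33 + c*A22 + c*A11) := ⟨_, rfl⟩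
  obtain ⟨x2_5, hx2_5⟩ : ∃ x : ℝ, x = ((-1:ℝ)*A12^2 + A11*A22 + c*A13^2 + c*A12^2 + (-1:ℝ)*c*A11*A33 + (-1:ℝ)*c*A11*A22) := ⟨_, rfl⟩
  obtain ⟨x2_6, hx2_6⟩ : ∃ x : ℝ, x = ((-1/2:ℝ) + A13^2 + (-1:ℝ)*A12^2 + (-1:ℝ)*A11*A33 + A11*A22 + c*A23^2 + (-1:ℝ)*c*A22*A33 + c*A13^2 + c*A12^2 + (-1:ℝ)*c*A11*A33 + (-1:ℝ)*c*A11*A22 + (1/2:ℝ)*c^2) := ⟨_, rfl⟩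
  obtain ⟨x2_7, hx2_7⟩ : ∃ x : ℝ, x = ((1/2:ℝ)*A11 + (-1:ℝ)*c*A13^2*A22 + (2:ℝ)*c*A12*A13*A23 + (-1:ℝ)*c*A12^2*A33 + (-1:ℝ)*c*A11*A23^2 + c*A11*A22*A33 + (-1/2:ℝ)*c^2*A11) := ⟨_, rfl⟩
  obtain ⟨x3_0, hx3_0⟩ : ∃ x : ℝ, x = (A33 + (-1:ℝ)*A22 + (6:ℝ)*A13^2*A22 + (-12:ℝ)*A12*A13*A23 + (6:ℝ)*A12^2*A33 + (6:ℝ)*A11*A23^2 + (-6:ℝ)*A11*A22*A33 + (2:ℝ)*c*A33 + (2:ℝ)*c*A22 + (3:ℝ)*c*A11) := ⟨_, rfl⟩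
  obtain ⟨x3_1, hx3_1⟩ : ∃ x : ℝ, x = (A13^2 + (-1:ℝ)*A12^2 + (-1:ℝ)*A11*A33 + A11*A22 + (2:ℝ)*c*A13^2 + (2:ℝ)*c*A12^2 + (-2:ℝ)*c*A11*A33 + (-2:ℝ)*c*A11*A22) := ⟨_, rfl⟩
  obtain ⟨x3_2, hx3_2⟩ : ∃ x : ℝ, x = ((-1/2:ℝ) + A23^2 + (-1:ℝ)*A22*A33 + (3:ℝ)*A13^2 + (-3:ℝ)*A11*A33 + (1/2:ℝ)*c + (2:ℝ)*c*A23^2 + (-2:ℝ)*c*A22*A33 + (3:ℝ)*c*A13^2 + (3:ℝ)*c*A12^2 + (-3:ℝ)*c*A11*A33 + (-3:ℝ)*c*A11*A22 + c^2) := ⟨_, rfl⟩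
  obtain ⟨x3_3, hx3_3⟩ : ∃ x : ℝ, x = ((-1:ℝ)*A13^2*A22 + (2:ℝ)*A12*A13*A23 + (-1:ℝ)*A12^2*A33 + (1/2:ℝ)*A11 + (-1:ℝ)*A11*A23^2 + A11*A22*A33 + (-2:ℝ)*c*A13^2*A22 + (4:ℝ)*c*A12*A13*A23 + (-2:ℝ)*c*A12^2*A33 + (-1/2:ℝ)*c*A11 + (-2:ℝ)*c*A11*A23^2 + (2:ℝ)*c*A11*A22*A33 + (-1:ℝ)*c^2*A11) := ⟨_, rfl⟩
  obtain ⟨x3_4, hx3_4⟩ : ∃ x : ℝ, x = ((-1/2:ℝ) + (-1:ℝ)*A23^2 + A22*A33 + (-3:ℝ)*A12^2 + (3:ℝ)*A11*A22 + (-1/2:ℝ)*c + (2:ℝ)*c*A23^2 + (-2:ℝ)*c*A22*A33 + (3:ℝ)*c*A13^2 + (3:ℝ)*c*A12^2 + (-3:ℝ)*c*A11*A33 + (-3:ℝ)*c*A11*A22 + c^2) := ⟨_, rfl⟩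
  obtain ⟨x3_5, hx3_5⟩ : ∃ x : ℝ, x = (A13^2*A22 + (-2:ℝ)*A12*A13*A23 + A12^2*A33 + (1/2:ℝ)*A11 + A11*A23^2 + (-1:ℝ)*A11*A22*A33 + (-2:ℝ)*c*A13^2*A22 + (4:ℝ)*c*A12*A13*A23 + (-2:ℝ)*c*A12^2*A33 + (1/2:ℝ)*c*A11 + (-2:ℝ)*c*A11*A23^2 + (2:ℝ)*c*A11*A22*A33 + (-1:ℝ)*c^2*A11) := ⟨_, rfl⟩
  obtain ⟨x3_6, hx3_6⟩ : ∃ x : ℝ, x = ((1/2:ℝ)*A33 + (1/2:ℝ)*A22 + (3/2:ℝ)*A11 + (-1/2:ℝ)*c*A33 + (1/2:ℝ)*c*A22 + (-3:ℝ)*c*A13^2*A22 + (6:ℝ)*c*A12*A13*A23 + (-3:ℝ)*c*A12^2*A33 + (-3:ℝ)*c*A11*A23^2 + (3:ℝ)*c*A11*A22*A33 + (-1:ℝ)*c^2*A33 + (-1:ℝ)*c^2*A22 + (-3/2:ℝ)*c^2*A11) := ⟨_, rfl⟩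
  obtain ⟨x3_7, hx3_7⟩ : ∃ x : ℝ, x = ((1/2:ℝ)*A13^2 + (1/2:ℝ)*A12^2 + (-1/2:ℝ)*A11*A33 + (-1/2:ℝ)*A11*A22 + (-1/2:ℝ)*c*A13^2 + (1/2:ℝ)*c*A12^2 + (1/2:ℝ)*c*A11*A33 + (-1/2:ℝ)*c*A11*A22 + (-1:ℝ)*c^2*A13^2 + (-1:ℝ)*c^2*A12^2 + c^2*A11*A33 + c^2*A11*A22) := ⟨_, rfl⟩
  obtain ⟨x4_0, hx4_0⟩ : ∃ x : ℝ, x = ((-1:ℝ) + (4:ℝ)*A13^2 + (-4:ℝ)*A12^2 + (-4:ℝ)*A11*A33 + (4:ℝ)*A11*A22 + (4:ℝ)*c*A23^2 + (-4:ℝ)*c*A22*A33 + (8:ℝ)*c*A13^2 + (8:ℝ)*c*A12^2 + (-8:ℝ)*c*A11*A33 + (-8:ℝ)*c*A11*A22 + (2:ℝ)*c^2) := ⟨_, rfl⟩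
  obtain ⟨x4_1, hx4_1⟩ : ∃ x : ℝ, x = (A11 + (-4:ℝ)*c*A13^2*A22 + (8:ℝ)*c*A12*A13*A23 + (-4:ℝ)*c*A12^2*A33 + (-4:ℝ)*c*A11*A23^2 + (4:ℝ)*c*A11*A22*A33 + (-2:ℝ)*c^2*A11) := ⟨_, rfl⟩
  obtain ⟨x4_2, hx4_2⟩ : ∃ x : ℝ, x = (A22 + (-4:ℝ)*A13^2*A22 + (8:ℝ)*A12*A13*A23 + (-4:ℝ)*A12^2*A33 + (2:ℝ)*A11 + (-4:ℝ)*A11*A23^2 + (4:ℝ)*A11*A22*A33 + (-2:ℝ)*c*A33 + (-8:ℝ)*c*A13^2*A22 + (16:ℝ)*c*A12*A13*A23 + (-8:ℝ)*c*A12^2*A33 + (-2:ℝ)*c*A11 + (-8:ℝ)*c*A11*A23^2 + (8:ℝ)*c*A11*A22*A33 + (-2:ℝ)*c^2*A33 + (-2:ℝ)*c^2*A22 + (-4:ℝ)*c^2*A11) := ⟨_, rfl⟩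
  obtain ⟨x4_3, hx4_3⟩ : ∃ x : ℝ, x = (A12^2 + (-1:ℝ)*A11*A22 + (-2:ℝ)*c*A13^2 + (2:ℝ)*c*A11*A33 + (-2:ℝ)*c^2*A13^2 + (-2:ℝ)*c^2*A12^2 + (2:ℝ)*c^2*A11*A33 + (2:ℝ)*c^2*A11*A22) := ⟨_, rfl⟩
  obtain ⟨x4_4, hx4_4⟩ : ∃ x : ℝ, x = (A33 + (4:ℝ)*A13^2*A22 + (-8:ℝ)*A12*A13*A23 + (4:ℝ)*A12^2*A33 + (2:ℝ)*A11 + (4:ℝ)*A11*A23^2 + (-4:ℝ)*A11*A22*A33 + (2:ℝ)*c*A22 + (-8:ℝ)*c*A13^2*A22 + (16:ℝ)*c*A12*A13*A23 + (-8:ℝ)*c*A12^2*A33 + (2:ℝ)*c*A11 + (-8:ℝ)*c*A11*A23^2 + (8:ℝ)*c*A11*A22*A33 + (-2:ℝ)*c^2*A33 + (-2:ℝ)*c^2*A22 + (-4:ℝ)*c^2*A11) := ⟨_, rfl⟩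
  obtain ⟨x4_5, hx4_5⟩ : ∃ x : ℝ, x = (A13^2 + (-1:ℝ)*A11*A33 + (2:ℝ)*c*A12^2 + (-2:ℝ)*c*A11*A22 + (-2:ℝ)*c^2*A13^2 + (-2:ℝ)*c^2*A12^2 + (2:ℝ)*c^2*A11*A33 + (2:ℝ)*c^2*A11*A22) := ⟨_, rfl⟩
  obtain ⟨x4_6, hx4_6⟩ : ∃ x : ℝ, x = (A23^2 + (-1:ℝ)*A22*A33 + (2:ℝ)*A13^2 + (2:ℝ)*A12^2 + (-2:ℝ)*A11*A33 + (-2:ℝ)*A11*A22 + c + (-2:ℝ)*c*A13^2 + (2:ℝ)*c*A12^2 + (2:ℝ)*c*A11*A33 + (-2:ℝ)*c*A11*A22 + (-2:ℝ)*c^2*A23^2 + (2:ℝ)*c^2*A22*A33 + (-4:ℝ)*c^2*A13^2 + (-4:ℝ)*c^2*A12^2 + (4:ℝ)*c^2*A11*A33 + (4:ℝ)*c^2*A11*A22 + (-1:ℝ)*c^3) := ⟨_, rfl⟩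
  obtain ⟨x4_7, hx4_7⟩ : ∃ x : ℝ, x = ((-1:ℝ)*A13^2*A22 + (2:ℝ)*A12*A13*A23 + (-1:ℝ)*A12^2*A33 + (-1:ℝ)*A11*A23^2 + A11*A22*A33 + (-1:ℝ)*c*A11 + (2:ℝ)*c^2*A13^2*A22 + (-4:ℝ)*c^2*A12*A13*A23 + (2:ℝ)*c^2*A12^2*A33 + (2:ℝ)*c^2*A11*A23^2 + (-2:ℝ)*c^2*A11*A22*A33 + c^3*A11) := ⟨_, rfl⟩
  obtain ⟨x5_0, hx5_0⟩ : ∃ x : ℝ, x = (A33 + A22 + (5:ℝ)*A11 + (-2:ℝ)*c*A33 + (2:ℝ)*c*A22 + (-20:ℝ)*c*A13^2*A22 + (40:ℝ)*c*A12*A13*A23 + (-20:ℝ)*c*A12^2*A33 + (-20:ℝ)*c*A11*A23^2 + (20:ℝ)*c*A11*A22*A33 + (-4:ℝ)*c^2*A33 + (-4:ℝ)*c^2*A22 + (-10:ℝ)*c^2*A11) := ⟨_, rfl⟩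
  obtain ⟨x5_1, hx5_1⟩ : ∃ x : ℝ, x = (A13^2 + A12^2 + (-1:ℝ)*A11*A33 + (-1:ℝ)*A11*A22 + (-2:ℝ)*c*A13^2 + (2:ℝ)*c*A12^2 + (2:ℝ)*c*A11*A33 + (-2:ℝ)*c*A11*A22 + (-4:ℝ)*c^2*A13^2 + (-4:ℝ)*c^2*A12^2 + (4:ℝ)*c^2*A11*A33 + (4:ℝ)*c^2*A11*A22) := ⟨_, rfl⟩
  obtain ⟨x5_2, hx5_2⟩ : ∃ x : ℝ, x = ((1/2:ℝ) + A23^2 + (-1:ℝ)*A22*A33 + (5:ℝ)*A12^2 + (-5:ℝ)*A11*A22 + (3/2:ℝ)*c + (-2:ℝ)*c*A23^2 + (2:ℝ)*c*A22*A33 + (-10:ℝ)*c*A13^2 + (10:ℝ)*c*A11*A33 + (-1:ℝ)*c^2 + (-4:ℝ)*c^2*A23^2 + (4:ℝ)*c^2*A22*A33 + (-10:ℝ)*c^2*A13^2 + (-10:ℝ)*c^2*A12^2 + (10:ℝ)*c^2*A11*A33 + (10:ℝ)*c^2*A11*A22 + (-2:ℝ)*c^3) := ⟨_, rfl⟩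
  obtain ⟨x5_3, hx5_3⟩ : ∃ x : ℝ, x = ((-1:ℝ)*A13^2*A22 + (2:ℝ)*A12*A13*A23 + (-1:ℝ)*A12^2*A33 + (-1/2:ℝ)*A11 + (-1:ℝ)*A11*A23^2 + A11*A22*A33 + (2:ℝ)*c*A13^2*A22 + (-4:ℝ)*c*A12*A13*A23 + (2:ℝ)*c*A12^2*A33 + (-3/2:ℝ)*c*A11 + (2:ℝ)*c*A11*A23^2 + (-2:ℝ)*c*A11*A22*A33 + (4:ℝ)*c^2*A13^2*A22 + (-8:ℝ)*c^2*A12*A13*A23 + (4:ℝ)*c^2*A12^2*A33 + c^2*A11 + (4:ℝ)*c^2*A11*A23^2 + (-4:ℝ)*c^2*A11*A22*A33 + (2:ℝ)*c^3*A11) := ⟨_, rfl⟩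
  obtain ⟨x5_4, hx5_4⟩ : ∃ x : ℝ, x = ((-1/2:ℝ) + A23^2 + (-1:ℝ)*A22*A33 + (5:ℝ)*A13^2 + (-5:ℝ)*A11*A33 + (3/2:ℝ)*c + (2:ℝ)*c*A23^2 + (-2:ℝ)*c*A22*A33 + (10:ℝ)*c*A12^2 + (-10:ℝ)*c*A11*A22 + c^2 + (-4:ℝ)*c^2*A23^2 + (4:ℝ)*c^2*A22*A33 + (-10:ℝ)*c^2*A13^2 + (-10:ℝ)*c^2*A12^2 + (10:ℝ)*c^2*A11*A33 + (10:ℝ)*c^2*A11*A22 + (-2:ℝ)*c^3) := ⟨_, rfl⟩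
  obtain ⟨x5_5, hx5_5⟩ : ∃ x : ℝ, x = ((-1:ℝ)*A13^2*A22 + (2:ℝ)*A12*A13*A23 + (-1:ℝ)*A12^2*A33 + (1/2:ℝ)*A11 + (-1:ℝ)*A11*A23^2 + A11*A22*A33 + (-2:ℝ)*c*A13^2*A22 + (4:ℝ)*c*A12*A13*A23 + (-2:ℝ)*c*A12^2*A33 + (-3/2:ℝ)*c*A11 + (-2:ℝ)*c*A11*A23^2 + (2:ℝ)*c*A11*A22*A33 + (4:ℝ)*c^2*A13^2*A22 + (-8:ℝ)*c^2*A12*A13*A23 + (4:ℝ)*c^2*A12^2*A33 + (-1:ℝ)*c^2*A11 + (4:ℝ)*c^2*A11*A23^2 + (-4:ℝ)*c^2*A11*A22*A33 + (2:ℝ)*c^3*A11) := ⟨_, rfl⟩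
  obtain ⟨x5_6, hx5_6⟩ : ∃ x : ℝ, x = ((-1/2:ℝ)*A33 + (1/2:ℝ)*A22 + (-5:ℝ)*A13^2*A22 + (10:ℝ)*A12*A13*A23 + (-5:ℝ)*A12^2*A33 + (-5:ℝ)*A11*A23^2 + (5:ℝ)*A11*A22*A33 + (-3/2:ℝ)*c*A33 + (-3/2:ℝ)*c*A22 + (-5:ℝ)*c*A11 + c^2*A33 + (-1:ℝ)*c^2*A22 + (10:ℝ)*c^2*A13^2*A22 + (-20:ℝ)*c^2*A12*A13*A23 + (10:ℝ)*c^2*A12^2*A33 + (10:ℝ)*c^2*A11*A23^2 + (-10:ℝ)*c^2*A11*A22*A33 + (2:ℝ)*c^3*A33 + (2:ℝ)*c^3*A22 + (5:ℝ)*c^3*A11) := ⟨_, rfl⟩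
  obtain ⟨x5_7, hx5_7⟩ : ∃ x : ℝ, x = ((-1/2:ℝ)*A13^2 + (1/2:ℝ)*A12^2 + (1/2:ℝ)*A11*A33 + (-1/2:ℝ)*A11*A22 + (-3/2:ℝ)*c*A13^2 + (-3/2:ℝ)*c*A12^2 + (3/2:ℝ)*c*A11*A33 + (3/2:ℝ)*c*A11*A22 + c^2*A13^2 + (-1:ℝ)*c^2*A12^2 + (-1:ℝ)*c^2*A11*A33 + c^2*A11*A22 + (2:ℝ)*c^3*A13^2 + (2:ℝ)*c^3*A12^2 + (-2:ℝ)*c^3*A11*A33 + (-2:ℝ)*c^3*A11*A22) := ⟨_, rfl⟩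
  obtain ⟨x6_0, hx6_0⟩ : ∃ x : ℝ, x = ((2:ℝ)*A23^2 + (-2:ℝ)*A22*A33 + (6:ℝ)*A13^2 + (6:ℝ)*A12^2 + (-6:ℝ)*A11*A33 + (-6:ℝ)*A11*A22 + (3:ℝ)*c + (-12:ℝ)*c*A13^2 + (12:ℝ)*c*A12^2 + (12:ℝ)*c*A11*A33 + (-12:ℝ)*c*A11*A22 + (-8:ℝ)*c^2*A23^2 + (8:ℝ)*c^2*A22*A33 + (-24:ℝ)*c^2*A13^2 + (-24:ℝ)*c^2*A12^2 + (24:ℝ)*c^2*A11*A33 + (24:ℝ)*c^2*A11*A22 + (-4:ℝ)*c^3) := ⟨_, rfl⟩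
  obtain ⟨x6_1, hx6_1⟩ : ∃ x : ℝ, x = ((-2:ℝ)*A13^2*A22 + (4:ℝ)*A12*A13*A23 + (-2:ℝ)*A12^2*A33 + (-2:ℝ)*A11*A23^2 + (2:ℝ)*A11*A22*A33 + (-3:ℝ)*c*A11 + (8:ℝ)*c^2*A13^2*A22 + (-16:ℝ)*c^2*A12*A13*A23 + (8:ℝ)*c^2*A12^2*A33 + (8:ℝ)*c^2*A11*A23^2 + (-8:ℝ)*c^2*A11*A22*A33 + (4:ℝ)*c^3*A11) := ⟨_, rfl⟩
  obtain ⟨x6_2, hx6_2⟩ : ∃ x : ℝ, x = ((-1:ℝ)*A33 + (-6:ℝ)*A13^2*A22 + (12:ℝ)*A12*A13*A23 + (-6:ℝ)*A12^2*A33 + (-3:ℝ)*A11 + (-6:ℝ)*A11*A23^2 + (6:ℝ)*A11*A22*A33 + (-1:ℝ)*c*A33 + (-3:ℝ)*c*A22 + (12:ℝ)*c*A13^2*A22 + (-24:ℝ)*c*A12*A13*A23 + (12:ℝ)*c*A12^2*A33 + (-9:ℝ)*c*A11 + (12:ℝ)*c*A11*A23^2 + (-12:ℝ)*c*A11*A22*A33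 + (4:ℝ)*c^2*A33 + (24:ℝ)*c^2*A13^2*A22 + (-48:ℝ)*c^2*A12*A13*A23 + (24:ℝ)*c^2*A12^2*A33 + (6:ℝ)*c^2*A11 + (24:ℝ)*c^2*A11*A23^2 + (-24:ℝ)*c^2*A11*A22*A33 + (4:ℝ)*c^3*A33 + (4:ℝ)*c^3*A22 + (12:ℝ)*c^3*A11) := ⟨_, rfl⟩
  obtain ⟨x6_3, hx6_3⟩ : ∃ x : ℝ, x = ((-1:ℝ)*A13^2 + A11*A33 + (-1:ℝ)*c*A13^2 + (-3:ℝ)*c*A12^2 + c*A11*A33 + (3:ℝ)*c*A11*A22 + (4:ℝ)*c^2*A13^2 + (-4:ℝ)*c^2*A11*A33 + (4:ℝ)*c^3*A13^2 + (4:ℝ)*c^3*A12^2 + (-4:ℝ)*c^3*A11*A33 + (-4:ℝ)*c^3*A11*A22) := ⟨_, rfl⟩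
  obtain ⟨x6_4, hx6_4⟩ : ∃ x : ℝ, x = (A22 + (-6:ℝ)*A13^2*A22 + (12:ℝ)*A12*A13*A23 + (-6:ℝ)*A12^2*A33 + (3:ℝ)*A11 + (-6:ℝ)*A11*A23^2 + (6:ℝ)*A11*A22*A33 + (-3:ℝ)*c*A33 + (-1:ℝ)*c*A22 + (-12:ℝ)*c*A13^2*A22 + (24:ℝ)*c*A12*A13*A23 + (-12:ℝ)*c*A12^2*A33 + (-9:ℝ)*c*A11 + (-12:ℝ)*c*A11*A23^2 + (12:ℝ)*c*A11*A22*A33 + (-4:ℝ)*c^2*A22 + (24:ℝ)*c^2*A13^2*A22 + (-48:ℝ)*c^2*A12*A13*A23 + (24:ℝ)*c^2*A12^2*A33 + (-6:ℝ)*c^2*A11 + (24:ℝ)*c^2*A11*A23^2 + (-24:ℝ)*c^2*A11*A22*A33 + (4:ℝ)*c^3*A33 + (4:ℝ)*c^3*A22 + (12:ℝ)*c^3*A11) := ⟨_, rfl⟩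
  obtain ⟨x6_5, hx6_5⟩ : ∃ x : ℝ, x = (A12^2 + (-1:ℝ)*A11*A22 + (-3:ℝ)*c*A13^2 + (-1:ℝ)*c*A12^2 + (3:ℝ)*c*A11*A33 + c*A11*A22 + (-4:ℝ)*c^2*A12^2 + (4:ℝ)*c^2*A11*A22 + (4:ℝ)*c^3*A13^2 + (4:ℝ)*c^3*A12^2 + (-4:ℝ)*c^3*A11*A33 + (-4:ℝ)*c^3*A11*A22) := ⟨_, rfl⟩
  obtain ⟨x6_6, hx6_6⟩ : ∃ x : ℝ, x = ((1/2:ℝ) + (-3:ℝ)*A13^2 + (3:ℝ)*A12^2 + (3:ℝ)*A11*A33 + (-3:ℝ)*A11*A22 + (-3:ℝ)*c*A23^2 + (3:ℝ)*c*A22*A33 + (-9:ℝ)*c*A13^2 + (-9:ℝ)*c*A12^2 + (9:ℝ)*c*A11*A33 + (9:ℝ)*c*A11*A22 + (-5/2:ℝ)*c^2 + (6:ℝ)*c^2*A13^2 + (-6:ℝ)*c^2*A12^2 + (-6:ℝ)*c^2*A11*A33 + (6:ℝ)*c^2*A11*A22 + (4:ℝ)*c^3*A23^2 + (-4:ℝ)*c^3*A22*A33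 + (12:ℝ)*c^3*A13^2 + (12:ℝ)*c^3*A12^2 + (-12:ℝ)*c^3*A11*A33 + (-12:ℝ)*c^3*A11*A22 + (2:ℝ)*c^4) := ⟨_, rfl⟩
  obtain ⟨x6_7, hx6_7⟩ : ∃ x : ℝ, x = ((-1/2:ℝ)*A11 + (3:ℝ)*c*A13^2*A22 + (-6:ℝ)*c*A12*A13*A23 + (3:ℝ)*c*A12^2*A33 + (3:ℝ)*c*A11*A23^2 + (-3:ℝ)*c*A11*A22*A33 + (5/2:ℝ)*c^2*A11 + (-4:ℝ)*c^3*A13^2*A22 + (8:ℝ)*c^3*A12*A13*A23 + (-4:ℝ)*c^3*A12^2*A33 + (-4:ℝ)*c^3*A11*A23^2 + (4:ℝ)*c^3*A11*A22*A33 + (-2:ℝ)*c^4*A11) := ⟨_, rfl⟩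
  obtain ⟨x7_0, hx7_0⟩ : ∃ x : ℝ, x = ((-1:ℝ)*A33 + A22 + (-14:ℝ)*A13^2*A22 + (28:ℝ)*A12*A13*A23 + (-14:ℝ)*A12^2*A33 + (-14:ℝ)*A11*A23^2 + (14:ℝ)*A11*A22*A33 + (-4:ℝ)*c*A33 + (-4:ℝ)*c*A22 + (-21:ℝ)*c*A11 + (4:ℝ)*c^2*A33 + (-4:ℝ)*c^2*A22 + (56:ℝ)*c^2*A13^2*A22 + (-112:ℝ)*c^2*A12*A13*A23 + (56:ℝ)*c^2*A12^2*A33 + (56:ℝ)*c^2*A11*A23^2 + (-56:ℝ)*c^2*A11*A22*A33 + (8:ℝ)*c^3*A33 + (8:ℝ)*c^3*A22 + (28:ℝ)*c^3*A11) := ⟨_, rfl⟩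
  obtain ⟨x7_1, hx7_1⟩ : ∃ x : ℝ, x = ((-1:ℝ)*A13^2 + A12^2 + A11*A33 + (-1:ℝ)*A11*A22 + (-4:ℝ)*c*A13^2 + (-4:ℝ)*c*A12^2 + (4:ℝ)*c*A11*A33 + (4:ℝ)*c*A11*A22 + (4:ℝ)*c^2*A13^2 + (-4:ℝ)*c^2*A12^2 + (-4:ℝ)*c^2*A11*A33 + (4:ℝ)*c^2*A11*A22 + (8:ℝ)*c^3*A13^2 + (8:ℝ)*c^3*A12^2 + (-8:ℝ)*c^3*A11*A33 + (-8:ℝ)*c^3*A11*A22) := ⟨_, rfl⟩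
  obtain ⟨x7_2, hx7_2⟩ : ∃ x : ℝ, x = ((1/2:ℝ) + (-1:ℝ)*A23^2 + A22*A33 + (-7:ℝ)*A13^2 + (7:ℝ)*A11*A33 + (-3/2:ℝ)*c + (-4:ℝ)*c*A23^2 + (4:ℝ)*c*A22*A33 + (-7:ℝ)*c*A13^2 + (-21:ℝ)*c*A12^2 + (7:ℝ)*c*A11*A33 + (21:ℝ)*c*A11*A22 + (-4:ℝ)*c^2 + (4:ℝ)*c^2*A23^2 + (-4:ℝ)*c^2*A22*A33 + (28:ℝ)*c^2*A13^2 + (-28:ℝ)*c^2*A11*A33 + (2:ℝ)*c^3 + (8:ℝ)*c^3*A23^2 + (-8:ℝ)*c^3*A22*A33 + (28:ℝ)*c^3*A13^2 + (28:ℝ)*c^3*A12^2 + (-28:ℝ)*c^3*A11*A33 + (-28:ℝ)*c^3*A11*A22 + (4:ℝ)*c^4) := ⟨_, rfl⟩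
  obtain ⟨x7_3, hx7_3⟩ : ∃ x : ℝ, x = (A13^2*A22 + (-2:ℝ)*A12*A13*A23 + A12^2*A33 + (-1/2:ℝ)*A11 + A11*A23^2 + (-1:ℝ)*A11*A22*A33 + (4:ℝ)*c*A13^2*A22 + (-8:ℝ)*c*A12*A13*A23 + (4:ℝ)*c*A12^2*A33 + (3/2:ℝ)*c*A11 + (4:ℝ)*c*A11*A23^2 + (-4:ℝ)*c*A11*A22*A33 + (-4:ℝ)*c^2*A13^2*A22 + (8:ℝ)*c^2*A12*A13*A23 + (-4:ℝ)*c^2*A12^2*A33 + (4:ℝ)*c^2*A11 + (-4:ℝ)*c^2*A11*A23^2 + (4:ℝ)*c^2*A11*A22*A33 + (-8:ℝ)*c^3*A13^2*A22 + (16:ℝ)*c^3*A12*A13*A23 + (-8:ℝ)*c^3*A12^2*A33 + (-2:ℝ)*c^3*A11 + (-8:ℝ)*c^3*A11*A23^2 + (8:ℝ)*c^3*A11*A22*A33 + (-4:ℝ)*c^4*A11) := ⟨_, rfl⟩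
  obtain ⟨x7_4, hx7_4⟩ : ∃ x : ℝ, x = ((1/2:ℝ) + A23^2 + (-1:ℝ)*A22*A33 + (7:ℝ)*A12^2 + (-7:ℝ)*A11*A22 + (3/2:ℝ)*c + (-4:ℝ)*c*A23^2 + (4:ℝ)*c*A22*A33 + (-21:ℝ)*c*A13^2 + (-7:ℝ)*c*A12^2 + (21:ℝ)*c*A11*A33 + (7:ℝ)*c*A11*A22 + (-4:ℝ)*c^2 + (-4:ℝ)*c^2*A23^2 + (4:ℝ)*c^2*A22*A33 + (-28:ℝ)*c^2*A12^2 + (28:ℝ)*c^2*A11*A22 + (-2:ℝ)*c^3 + (8:ℝ)*c^3*A23^2 + (-8:ℝ)*c^3*A22*A33 + (28:ℝ)*c^3*A13^2 + (28:ℝ)*c^3*A12^2 + (-28:ℝ)*c^3*A11*A33 + (-28:ℝ)*c^3*A11*A22 + (4:ℝ)*c^4) := ⟨_, rfl⟩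
  obtain ⟨x7_5, hx7_5⟩ : ∃ x : ℝ, x = ((-1:ℝ)*A13^2*A22 + (2:ℝ)*A12*A13*A23 + (-1:ℝ)*A12^2*A33 + (-1/2:ℝ)*A11 + (-1:ℝ)*A11*A23^2 + A11*A22*A33 + (4:ℝ)*c*A13^2*A22 + (-8:ℝ)*c*A12*A13*A23 + (4:ℝ)*c*A12^2*A33 + (-3/2:ℝ)*c*A11 + (4:ℝ)*c*A11*A23^2 + (-4:ℝ)*c*A11*A22*A33 + (4:ℝ)*c^2*A13^2*A22 + (-8:ℝ)*c^2*A12*A13*A23 + (4:ℝ)*c^2*A12^2*A33 + (4:ℝ)*c^2*A11 + (4:ℝ)*c^2*A11*A23^2 + (-4:ℝ)*c^2*A11*A22*A33 + (-8:ℝ)*c^3*A13^2*A22 + (16:ℝ)*c^3*A12*A13*A23 + (-8:ℝ)*c^3*A12^2*A33 + (2:ℝ)*c^3*A11 + (-8:ℝ)*c^3*A11*A23^2 + (8:ℝ)*c^3*A11*A22*A33 + (-4:ℝ)*c^4*A11) := ⟨_, rfl⟩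
  obtain ⟨x7_6, hx7_6⟩ : ∃ x : ℝ, x = ((-1/2:ℝ)*A33 + (-1/2:ℝ)*A22 + (-7/2:ℝ)*A11 + (3/2:ℝ)*c*A33 + (-3/2:ℝ)*c*A22 + (21:ℝ)*c*A13^2*A22 + (-42:ℝ)*c*A12*A13*A23 + (21:ℝ)*c*A12^2*A33 + (21:ℝ)*c*A11*A23^2 + (-21:ℝ)*c*A11*A22*A33 + (4:ℝ)*c^2*A33 + (4:ℝ)*c^2*A22 + (35/2:ℝ)*c^2*A11 + (-2:ℝ)*c^3*A33 + (2:ℝ)*c^3*A22 + (-28:ℝ)*c^3*A13^2*A22 + (56:ℝ)*c^3*A12*A13*A23 + (-28:ℝ)*c^3*A12^2*A33 + (-28:ℝ)*c^3*A11*A23^2 + (28:ℝ)*c^3*A11*A22*A33 + (-4:ℝ)*c^4*A33 + (-4:ℝ)*c^4*A22 + (-14:ℝ)*c^4*A11) := ⟨_, rfl⟩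
  obtain ⟨x7_7, hx7_7⟩ : ∃ x : ℝ, x = ((-1/2:ℝ)*A13^2 + (-1/2:ℝ)*A12^2 + (1/2:ℝ)*A11*A33 + (1/2:ℝ)*A11*A22 + (3/2:ℝ)*c*A13^2 + (-3/2:ℝ)*c*A12^2 + (-3/2:ℝ)*c*A11*A33 + (3/2:ℝ)*c*A11*A22 + (4:ℝ)*c^2*A13^2 + (4:ℝ)*c^2*A12^2 + (-4:ℝ)*c^2*A11*A33 + (-4:ℝ)*c^2*A11*A22 + (-2:ℝ)*c^3*A13^2 + (2:ℝ)*c^3*A12^2 + (2:ℝ)*c^3*A11*A33 + (-2:ℝ)*c^3*A11*A22 + (-4:ℝ)*c^4*A13^2 + (-4:ℝ)*c^4*A12^2 + (4:ℝ)*c^4*A11*A33 + (4:ℝ)*c^4*A11*A22) := ⟨_, rfl⟩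
  obtain ⟨x8_0, hx8_0⟩ : ∃ x : ℝ, x = ((1:ℝ) + (-8:ℝ)*A13^2 + (8:ℝ)*A12^2 + (8:ℝ)*A11*A33 + (-8:ℝ)*A11*A22 + (-8:ℝ)*c*A23^2 + (8:ℝ)*c*A22*A33 + (-32:ℝ)*c*A13^2 + (-32:ℝ)*c*A12^2 + (32:ℝ)*c*A11*A33 + (32:ℝ)*c*A11*A22 + (-8:ℝ)*c^2 + (32:ℝ)*c^2*A13^2 + (-32:ℝ)*c^2*A12^2 + (-32:ℝ)*c^2*A11*A33 + (32:ℝ)*c^2*A11*A22 + (16:ℝ)*c^3*A23^2 + (-16:ℝ)*c^3*A22*A33 + (64:ℝ)*c^3*A13^2 + (64:ℝ)*c^3*A12^2 + (-64:ℝ)*c^3*A11*A33 + (-64:ℝ)*c^3*A11*A22 + (8:ℝ)*c^4) := ⟨_, rfl⟩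
  obtain ⟨x8_1, hx8_1⟩ : ∃ x : ℝ, x = ((-1:ℝ)*A11 + (8:ℝ)*c*A13^2*A22 + (-16:ℝ)*c*A12*A13*A23 + (8:ℝ)*c*A12^2*A33 + (8:ℝ)*c*A11*A23^2 + (-8:ℝ)*c*A11*A22*A33 + (8:ℝ)*c^2*A11 + (-16:ℝ)*c^3*A13^2*A22 + (32:ℝ)*c^3*A12*A13*A23 + (-16:ℝ)*c^3*A12^2*A33 + (-16:ℝ)*c^3*A11*A23^2 + (16:ℝ)*c^3*A11*A22*A33 + (-8:ℝ)*c^4*A11) := ⟨_, rfl⟩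
  obtain ⟨x8_2, hx8_2⟩ : ∃ x : ℝ, x = ((-1:ℝ)*A22 + (8:ℝ)*A13^2*A22 + (-16:ℝ)*A12*A13*A23 + (8:ℝ)*A12^2*A33 + (-4:ℝ)*A11 + (8:ℝ)*A11*A23^2 + (-8:ℝ)*A11*A22*A33 + (4:ℝ)*c*A33 + (32:ℝ)*c*A13^2*A22 + (-64:ℝ)*c*A12*A13*A23 + (32:ℝ)*c*A12^2*A33 + (12:ℝ)*c*A11 + (32:ℝ)*c*A11*A23^2 + (-32:ℝ)*c*A11*A22*A33 + (4:ℝ)*c^2*A33 + (8:ℝ)*c^2*A22 + (-32:ℝ)*c^2*A13^2*A22 + (64:ℝ)*c^2*A12*A13*A23 + (-32:ℝ)*c^2*A12^2*A33 + (32:ℝ)*c^2*A11 + (-32:ℝ)*c^2*A11*A23^2 + (32:ℝ)*c^2*A11*A22*A33 + (-8:ℝ)*c^3*A33 + (-64:ℝ)*c^3*A13^2*A22 + (128:ℝ)*c^3*A12*A13*A23 + (-64:ℝ)*c^3*A12^2*A33 + (-16:ℝ)*c^3*A11 + (-64:ℝ)*c^3*A11*A23^2 + (64:ℝ)*c^3*A11*A22*A33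 + (-8:ℝ)*c^4*A33 + (-8:ℝ)*c^4*A22 + (-32:ℝ)*c^4*A11) := ⟨_, rfl⟩
  obtain ⟨x8_3, hx8_3⟩ : ∃ x : ℝ, x = ((-1:ℝ)*A12^2 + A11*A22 + (4:ℝ)*c*A13^2 + (-4:ℝ)*c*A11*A33 + (4:ℝ)*c^2*A13^2 + (8:ℝ)*c^2*A12^2 + (-4:ℝ)*c^2*A11*A33 + (-8:ℝ)*c^2*A11*A22 + (-8:ℝ)*c^3*A13^2 + (8:ℝ)*c^3*A11*A33 + (-8:ℝ)*c^4*A13^2 + (-8:ℝ)*c^4*A12^2 + (8:ℝ)*c^4*A11*A33 + (8:ℝ)*c^4*A11*A22) := ⟨_, rfl⟩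
  obtain ⟨x8_4, hx8_4⟩ : ∃ x : ℝ, x = ((-1:ℝ)*A33 + (-8:ℝ)*A13^2*A22 + (16:ℝ)*A12*A13*A23 + (-8:ℝ)*A12^2*A33 + (-4:ℝ)*A11 + (-8:ℝ)*A11*A23^2 + (8:ℝ)*A11*A22*A33 + (-4:ℝ)*c*A22 + (32:ℝ)*c*A13^2*A22 + (-64:ℝ)*c*A12*A13*A23 + (32:ℝ)*c*A12^2*A33 + (-12:ℝ)*c*A11 + (32:ℝ)*c*A11*A23^2 + (-32:ℝ)*c*A11*A22*A33 + (8:ℝ)*c^2*A33 + (4:ℝ)*c^2*A22 + (32:ℝ)*c^2*A13^2*A22 + (-64:ℝ)*c^2*A12*A13*A23 + (32:ℝ)*c^2*A12^2*A33 + (32:ℝ)*c^2*A11 + (32:ℝ)*c^2*A11*A23^2 + (-32:ℝ)*c^2*A11*A22*A33 + (8:ℝ)*c^3*A22 + (-64:ℝ)*c^3*A13^2*A22 + (128:ℝ)*c^3*A12*A13*A23 + (-64:ℝ)*c^3*A12^2*A33 + (16:ℝ)*c^3*A11 + (-64:ℝ)*c^3*A11*A23^2 + (64:ℝ)*c^3*A11*A22*A33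 + (-8:ℝ)*c^4*A33 + (-8:ℝ)*c^4*A22 + (-32:ℝ)*c^4*A11) := ⟨_, rfl⟩
  obtain ⟨x8_5, hx8_5⟩ : ∃ x : ℝ, x = ((-1:ℝ)*A13^2 + A11*A33 + (-4:ℝ)*c*A12^2 + (4:ℝ)*c*A11*A22 + (8:ℝ)*c^2*A13^2 + (4:ℝ)*c^2*A12^2 + (-8:ℝ)*c^2*A11*A33 + (-4:ℝ)*c^2*A11*A22 + (8:ℝ)*c^3*A12^2 + (-8:ℝ)*c^3*A11*A22 + (-8:ℝ)*c^4*A13^2 + (-8:ℝ)*c^4*A12^2 + (8:ℝ)*c^4*A11*A33 + (8:ℝ)*c^4*A11*A22) := ⟨_, rfl⟩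
  obtain ⟨x8_6, hx8_6⟩ : ∃ x : ℝ, x = ((-1:ℝ)*A23^2 + A22*A33 + (-4:ℝ)*A13^2 + (-4:ℝ)*A12^2 + (4:ℝ)*A11*A33 + (4:ℝ)*A11*A22 + (-2:ℝ)*c + (12:ℝ)*c*A13^2 + (-12:ℝ)*c*A12^2 + (-12:ℝ)*c*A11*A33 + (12:ℝ)*c*A11*A22 + (8:ℝ)*c^2*A23^2 + (-8:ℝ)*c^2*A22*A33 + (32:ℝ)*c^2*A13^2 + (32:ℝ)*c^2*A12^2 + (-32:ℝ)*c^2*A11*A33 + (-32:ℝ)*c^2*A11*A22 + (6:ℝ)*c^3 + (-16:ℝ)*c^3*A13^2 + (16:ℝ)*c^3*A12^2 + (16:ℝ)*c^3*A11*A33 + (-16:ℝ)*c^3*A11*A22 + (-8:ℝ)*c^4*A23^2 + (8:ℝ)*c^4*A22*A33 + (-32:ℝ)*c^4*A13^2 + (-32:ℝ)*c^4*A12^2 + (32:ℝ)*c^4*A11*A33 + (32:ℝ)*c^4*A11*A22 + (-4:ℝ)*c^5) := ⟨_, rfl⟩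
  obtain ⟨x8_7, hx8_7⟩ : ∃ x : ℝ, x = (A13^2*A22 + (-2:ℝ)*A12*A13*A23 + A12^2*A33 + A11*A23^2 + (-1:ℝ)*A11*A22*A33 + (2:ℝ)*c*A11 + (-8:ℝ)*c^2*A13^2*A22 + (16:ℝ)*c^2*A12*A13*A23 + (-8:ℝ)*c^2*A12^2*A33 + (-8:ℝ)*c^2*A11*A23^2 + (8:ℝ)*c^2*A11*A22*A33 + (-6:ℝ)*c^3*A11 + (8:ℝ)*c^4*A13^2*A22 + (-16:ℝ)*c^4*A12*A13*A23 + (8:ℝ)*c^4*A12^2*A33 + (8:ℝ)*c^4*A11*A23^2 + (-8:ℝ)*c^4*A11*A22*A33 + (4:ℝ)*c^5*A11) := ⟨_, rfl⟩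
  obtain ⟨x9_0, hx9_0⟩ : ∃ x : ℝ, x = ((-1:ℝ)*A33 + (-1:ℝ)*A22 + (-9:ℝ)*A11 + (4:ℝ)*c*A33 + (-4:ℝ)*c*A22 + (72:ℝ)*c*A13^2*A22 + (-144:ℝ)*c*A12*A13*A23 + (72:ℝ)*c*A12^2*A33 + (72:ℝ)*c*A11*A23^2 + (-72:ℝ)*c*A11*A22*A33 + (12:ℝ)*c^2*A33 + (12:ℝ)*c^2*A22 + (72:ℝ)*c^2*A11 + (-8:ℝ)*c^3*A33 + (8:ℝ)*c^3*A22 + (-144:ℝ)*c^3*A13^2*A22 + (288:ℝ)*c^3*A12*A13*A23 + (-144:ℝ)*c^3*A12^2*A33 + (-144:ℝ)*c^3*A11*A23^2 + (144:ℝ)*c^3*A11*A22*A33 + (-16:ℝ)*c^4*A33 + (-16:ℝ)*c^4*A22 + (-72:ℝ)*c^4*A11) := ⟨_, rfl⟩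
  obtain ⟨x9_1, hx9_1⟩ : ∃ x : ℝ, x = ((-1:ℝ)*A13^2 + (-1:ℝ)*A12^2 + A11*A33 + A11*A22 + (4:ℝ)*c*A13^2 + (-4:ℝ)*c*A12^2 + (-4:ℝ)*c*A11*A33 + (4:ℝ)*c*A11*A22 + (12:ℝ)*c^2*A13^2 + (12:ℝ)*c^2*A12^2 + (-12:ℝ)*c^2*A11*A33 + (-12:ℝ)*c^2*A11*A22 + (-8:ℝ)*c^3*A13^2 + (8:ℝ)*c^3*A12^2 + (8:ℝ)*c^3*A11*A33 + (-8:ℝ)*c^3*A11*A22 + (-16:ℝ)*c^4*A13^2 + (-16:ℝ)*c^4*A12^2 + (16:ℝ)*c^4*A11*A33 + (16:ℝ)*c^4*A11*A22) := ⟨_, rfl⟩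
  obtain ⟨x9_2, hx9_2⟩ : ∃ x : ℝ, x = ((-1/2:ℝ) + (-1:ℝ)*A23^2 + A22*A33 + (-9:ℝ)*A12^2 + (9:ℝ)*A11*A22 + (-5/2:ℝ)*c + (4:ℝ)*c*A23^2 + (-4:ℝ)*c*A22*A33 + (36:ℝ)*c*A13^2 + (-36:ℝ)*c*A11*A33 + (4:ℝ)*c^2 + (12:ℝ)*c^2*A23^2 + (-12:ℝ)*c^2*A22*A33 + (36:ℝ)*c^2*A13^2 + (72:ℝ)*c^2*A12^2 + (-36:ℝ)*c^2*A11*A33 + (-72:ℝ)*c^2*A11*A22 + (10:ℝ)*c^3 + (-8:ℝ)*c^3*A23^2 + (8:ℝ)*c^3*A22*A33 + (-72:ℝ)*c^3*A13^2 + (72:ℝ)*c^3*A11*A33 + (-4:ℝ)*c^4 + (-16:ℝ)*c^4*A23^2 + (16:ℝ)*c^4*A22*A33 + (-72:ℝ)*c^4*A13^2 + (-72:ℝ)*c^4*A12^2 + (72:ℝ)*c^4*A11*A33 + (72:ℝ)*c^4*A11*A22 + (-8:ℝ)*c^5) := ⟨_, rfl⟩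
  obtain ⟨x9_3, hx9_3⟩ : ∃ x : ℝ, x = (A13^2*A22 + (-2:ℝ)*A12*A13*A23 + A12^2*A33 + (1/2:ℝ)*A11 + A11*A23^2 + (-1:ℝ)*A11*A22*A33 + (-4:ℝ)*c*A13^2*A22 + (8:ℝ)*c*A12*A13*A23 + (-4:ℝ)*c*A12^2*A33 + (5/2:ℝ)*c*A11 + (-4:ℝ)*c*A11*A23^2 + (4:ℝ)*c*A11*A22*A33 + (-12:ℝ)*c^2*A13^2*A22 + (24:ℝ)*c^2*A12*A13*A23 + (-12:ℝ)*c^2*A12^2*A33 + (-4:ℝ)*c^2*A11 + (-12:ℝ)*c^2*A11*A23^2 + (12:ℝ)*c^2*A11*A22*A33 + (8:ℝ)*c^3*A13^2*A22 + (-16:ℝ)*c^3*A12*A13*A23 + (8:ℝ)*c^3*A12^2*A33 + (-10:ℝ)*c^3*A11 + (8:ℝ)*c^3*A11*A23^2 + (-8:ℝ)*c^3*A11*A22*A33 + (16:ℝ)*c^4*A13^2*A22 + (-32:ℝ)*c^4*A12*A13*A23 + (16:ℝ)*c^4*A12^2*A33 + (4:ℝ)*c^4*A11 + (16:ℝ)*c^4*A11*A23^2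 + (-16:ℝ)*c^4*A11*A22*A33 + (8:ℝ)*c^5*A11) := ⟨_, rfl⟩
  obtain ⟨x9_4, hx9_4⟩ : ∃ x : ℝ, x = ((1/2:ℝ) + (-1:ℝ)*A23^2 + A22*A33 + (-9:ℝ)*A13^2 + (9:ℝ)*A11*A33 + (-5/2:ℝ)*c + (-4:ℝ)*c*A23^2 + (4:ℝ)*c*A22*A33 + (-36:ℝ)*c*A12^2 + (36:ℝ)*c*A11*A22 + (-4:ℝ)*c^2 + (12:ℝ)*c^2*A23^2 + (-12:ℝ)*c^2*A22*A33 + (72:ℝ)*c^2*A13^2 + (36:ℝ)*c^2*A12^2 + (-72:ℝ)*c^2*A11*A33 + (-36:ℝ)*c^2*A11*A22 + (10:ℝ)*c^3 + (8:ℝ)*c^3*A23^2 + (-8:ℝ)*c^3*A22*A33 + (72:ℝ)*c^3*A12^2 + (-72:ℝ)*c^3*A11*A22 + (4:ℝ)*c^4 + (-16:ℝ)*c^4*A23^2 + (16:ℝ)*c^4*A22*A33 + (-72:ℝ)*c^4*A13^2 + (-72:ℝ)*c^4*A12^2 + (72:ℝ)*c^4*A11*A33 + (72:ℝ)*c^4*A11*A22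 + (-8:ℝ)*c^5) := ⟨_, rfl⟩
  obtain ⟨x9_5, hx9_5⟩ : ∃ x : ℝ, x = (A13^2*A22 + (-2:ℝ)*A12*A13*A23 + A12^2*A33 + (-1/2:ℝ)*A11 + A11*A23^2 + (-1:ℝ)*A11*A22*A33 + (4:ℝ)*c*A13^2*A22 + (-8:ℝ)*c*A12*A13*A23 + (4:ℝ)*c*A12^2*A33 + (5/2:ℝ)*c*A11 + (4:ℝ)*c*A11*A23^2 + (-4:ℝ)*c*A11*A22*A33 + (-12:ℝ)*c^2*A13^2*A22 + (24:ℝ)*c^2*A12*A13*A23 + (-12:ℝ)*c^2*A12^2*A33 + (4:ℝ)*c^2*A11 + (-12:ℝ)*c^2*A11*A23^2 + (12:ℝ)*c^2*A11*A22*A33 + (-8:ℝ)*c^3*A13^2*A22 + (16:ℝ)*c^3*A12*A13*A23 + (-8:ℝ)*c^3*A12^2*A33 + (-10:ℝ)*c^3*A11 + (-8:ℝ)*c^3*A11*A23^2 + (8:ℝ)*c^3*A11*A22*A33 + (16:ℝ)*c^4*A13^2*A22 + (-32:ℝ)*c^4*A12*A13*A23 + (16:ℝ)*c^4*A12^2*A33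 + (-4:ℝ)*c^4*A11 + (16:ℝ)*c^4*A11*A23^2 + (-16:ℝ)*c^4*A11*A22*A33 + (8:ℝ)*c^5*A11) := ⟨_, rfl⟩
  obtain ⟨x9_6, hx9_6⟩ : ∃ x : ℝ, x = ((1/2:ℝ)*A33 + (-1/2:ℝ)*A22 + (9:ℝ)*A13^2*A22 + (-18:ℝ)*A12*A13*A23 + (9:ℝ)*A12^2*A33 + (9:ℝ)*A11*A23^2 + (-9:ℝ)*A11*A22*A33 + (5/2:ℝ)*c*A33 + (5/2:ℝ)*c*A22 + (18:ℝ)*c*A11 + (-4:ℝ)*c^2*A33 + (4:ℝ)*c^2*A22 + (-72:ℝ)*c^2*A13^2*A22 + (144:ℝ)*c^2*A12*A13*A23 + (-72:ℝ)*c^2*A12^2*A33 + (-72:ℝ)*c^2*A11*A23^2 + (72:ℝ)*c^2*A11*A22*A33 + (-10:ℝ)*c^3*A33 + (-10:ℝ)*c^3*A22 + (-54:ℝ)*c^3*A11 + (4:ℝ)*c^4*A33 + (-4:ℝ)*c^4*A22 + (72:ℝ)*c^4*A13^2*A22 + (-144:ℝ)*c^4*A12*A13*A23 + (72:ℝ)*c^4*A12^2*A33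 + (72:ℝ)*c^4*A11*A23^2 + (-72:ℝ)*c^4*A11*A22*A33 + (8:ℝ)*c^5*A33 + (8:ℝ)*c^5*A22 + (36:ℝ)*c^5*A11) := ⟨_, rfl⟩
  obtain ⟨x9_7, hx9_7⟩ : ∃ x : ℝ, x = ((1/2:ℝ)*A13^2 + (-1/2:ℝ)*A12^2 + (-1/2:ℝ)*A11*A33 + (1/2:ℝ)*A11*A22 + (5/2:ℝ)*c*A13^2 + (5/2:ℝ)*c*A12^2 + (-5/2:ℝ)*c*A11*A33 + (-5/2:ℝ)*c*A11*A22 + (-4:ℝ)*c^2*A13^2 + (4:ℝ)*c^2*A12^2 + (4:ℝ)*c^2*A11*A33 + (-4:ℝ)*c^2*A11*A22 + (-10:ℝ)*c^3*A13^2 + (-10:ℝ)*c^3*A12^2 + (10:ℝ)*c^3*A11*A33 + (10:ℝ)*c^3*A11*A22 + (4:ℝ)*c^4*A13^2 + (-4:ℝ)*c^4*A12^2 + (-4:ℝ)*c^4*A11*A33 + (4:ℝ)*c^4*A11*A22 + (8:ℝ)*c^5*A13^2 + (8:ℝ)*c^5*A12^2 + (-8:ℝ)*c^5*A11*A33 +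 (-8:ℝ)*c^5*A11*A22) := ⟨_, rfl⟩
  obtain ⟨x10_0, hx10_0⟩ : ∃ x : ℝ, x = ((-2:ℝ)*A23^2 + (2:ℝ)*A22*A33 + (-10:ℝ)*A13^2 + (-10:ℝ)*A12^2 + (10:ℝ)*A11*A33 + (10:ℝ)*A11*A22 + (-5:ℝ)*c + (40:ℝ)*c*A13^2 + (-40:ℝ)*c*A12^2 + (-40:ℝ)*c*A11*A33 + (40:ℝ)*c*A11*A22 + (24:ℝ)*c^2*A23^2 + (-24:ℝ)*c^2*A22*A33 + (120:ℝ)*c^2*A13^2 + (120:ℝ)*c^2*A12^2 + (-120:ℝ)*c^2*A11*A33 + (-120:ℝ)*c^2*A11*A22 + (20:ℝ)*c^3 + (-80:ℝ)*c^3*A13^2 + (80:ℝ)*c^3*A12^2 + (80:ℝ)*c^3*A11*A33 + (-80:ℝ)*c^3*A11*A22 + (-32:ℝ)*c^4*A23^2 + (32:ℝ)*c^4*A22*A33 + (-160:ℝ)*c^4*A13^2 + (-160:ℝ)*c^4*A12^2 + (160:ℝ)*c^4*A11*A33 + (160:ℝ)*c^4*A11*A22 + (-16:ℝ)*c^5)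 := ⟨_, rfl⟩
  obtain ⟨x10_1, hx10_1⟩ : ∃ x : ℝ, x = ((2:ℝ)*A13^2*A22 + (-4:ℝ)*A12*A13*A23 + (2:ℝ)*A12^2*A33 + (2:ℝ)*A11*A23^2 + (-2:ℝ)*A11*A22*A33 + (5:ℝ)*c*A11 + (-24:ℝ)*c^2*A13^2*A22 + (48:ℝ)*c^2*A12*A13*A23 + (-24:ℝ)*c^2*A12^2*A33 + (-24:ℝ)*c^2*A11*A23^2 + (24:ℝ)*c^2*A11*A22*A33 + (-20:ℝ)*c^3*A11 + (32:ℝ)*c^4*A13^2*A22 + (-64:ℝ)*c^4*A12*A13*A23 + (32:ℝ)*c^4*A12^2*A33 + (32:ℝ)*c^4*A11*A23^2 + (-32:ℝ)*c^4*A11*A22*A33 + (16:ℝ)*c^5*A11) := ⟨_, rfl⟩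
  obtain ⟨x10_2, hx10_2⟩ : ∃ x : ℝ, x = (A33 + (10:ℝ)*A13^2*A22 + (-20:ℝ)*A12*A13*A23 + (10:ℝ)*A12^2*A33 + (5:ℝ)*A11 + (10:ℝ)*A11*A23^2 + (-10:ℝ)*A11*A22*A33 + c*A33 + (5:ℝ)*c*A22 + (-40:ℝ)*c*A13^2*A22 + (80:ℝ)*c*A12*A13*A23 + (-40:ℝ)*c*A12^2*A33 + (25:ℝ)*c*A11 + (-40:ℝ)*c*A11*A23^2 + (40:ℝ)*c*A11*A22*A33 + (-12:ℝ)*c^2*A33 + (-120:ℝ)*c^2*A13^2*A22 + (240:ℝ)*c^2*A12*A13*A23 + (-120:ℝ)*c^2*A12^2*A33 + (-40:ℝ)*c^2*A11 + (-120:ℝ)*c^2*A11*A23^2 + (120:ℝ)*c^2*A11*A22*A33 + (-12:ℝ)*c^3*A33 + (-20:ℝ)*c^3*A22 + (80:ℝ)*c^3*A13^2*A22 + (-160:ℝ)*c^3*A12*A13*A23 + (80:ℝ)*c^3*A12^2*A33 + (-100:ℝ)*c^3*A11 + (80:ℝ)*c^3*A11*A23^2 + (-80:ℝ)*c^3*A11*A22*A33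 + (16:ℝ)*c^4*A33 + (160:ℝ)*c^4*A13^2*A22 + (-320:ℝ)*c^4*A12*A13*A23 + (160:ℝ)*c^4*A12^2*A33 + (40:ℝ)*c^4*A11 + (160:ℝ)*c^4*A11*A23^2 + (-160:ℝ)*c^4*A11*A22*A33 + (16:ℝ)*c^5*A33 + (16:ℝ)*c^5*A22 + (80:ℝ)*c^5*A11) := ⟨_, rfl⟩
  obtain ⟨x10_3, hx10_3⟩ : ∃ x : ℝ, x = (A13^2 + (-1:ℝ)*A11*A33 + c*A13^2 + (5:ℝ)*c*A12^2 + (-1:ℝ)*c*A11*A33 + (-5:ℝ)*c*A11*A22 + (-12:ℝ)*c^2*A13^2 + (12:ℝ)*c^2*A11*A33 + (-12:ℝ)*c^3*A13^2 + (-20:ℝ)*c^3*A12^2 + (12:ℝ)*c^3*A11*A33 + (20:ℝ)*c^3*A11*A22 + (16:ℝ)*c^4*A13^2 + (-16:ℝ)*c^4*A11*A33 + (16:ℝ)*c^5*A13^2 + (16:ℝ)*c^5*A12^2 + (-16:ℝ)*c^5*A11*A33 + (-16:ℝ)*c^5*A11*A22) := ⟨_, rfl⟩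
  obtain ⟨x10_4, hx10_4⟩ : ∃ x : ℝ, x = ((-1:ℝ)*A22 + (10:ℝ)*A13^2*A22 + (-20:ℝ)*A12*A13*A23 + (10:ℝ)*A12^2*A33 + (-5:ℝ)*A11 + (10:ℝ)*A11*A23^2 + (-10:ℝ)*A11*A22*A33 + (5:ℝ)*c*A33 + c*A22 + (40:ℝ)*c*A13^2*A22 + (-80:ℝ)*c*A12*A13*A23 + (40:ℝ)*c*A12^2*A33 + (25:ℝ)*c*A11 + (40:ℝ)*c*A11*A23^2 + (-40:ℝ)*c*A11*A22*A33 + (12:ℝ)*c^2*A22 + (-120:ℝ)*c^2*A13^2*A22 + (240:ℝ)*c^2*A12*A13*A23 + (-120:ℝ)*c^2*A12^2*A33 + (40:ℝ)*c^2*A11 + (-120:ℝ)*c^2*A11*A23^2 + (120:ℝ)*c^2*A11*A22*A33 + (-20:ℝ)*c^3*A33 + (-12:ℝ)*c^3*A22 + (-80:ℝ)*c^3*A13^2*A22 + (160:ℝ)*c^3*A12*A13*A23 + (-80:ℝ)*c^3*A12^2*A33 + (-100:ℝ)*c^3*A11 + (-80:ℝ)*c^3*A11*A23^2 + (80:ℝ)*c^3*A11*A22*A33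 + (-16:ℝ)*c^4*A22 + (160:ℝ)*c^4*A13^2*A22 + (-320:ℝ)*c^4*A12*A13*A23 + (160:ℝ)*c^4*A12^2*A33 + (-40:ℝ)*c^4*A11 + (160:ℝ)*c^4*A11*A23^2 + (-160:ℝ)*c^4*A11*A22*A33 + (16:ℝ)*c^5*A33 + (16:ℝ)*c^5*A22 + (80:ℝ)*c^5*A11) := ⟨_, rfl⟩
  obtain ⟨x10_5, hx10_5⟩ : ∃ x : ℝ, x = ((-1:ℝ)*A12^2 + A11*A22 + (5:ℝ)*c*A13^2 + c*A12^2 + (-5:ℝ)*c*A11*A33 + (-1:ℝ)*c*A11*A22 + (12:ℝ)*c^2*A12^2 + (-12:ℝ)*c^2*A11*A22 + (-20:ℝ)*c^3*A13^2 + (-12:ℝ)*c^3*A12^2 + (20:ℝ)*c^3*A11*A33 + (12:ℝ)*c^3*A11*A22 + (-16:ℝ)*c^4*A12^2 + (16:ℝ)*c^4*A11*A22 + (16:ℝ)*c^5*A13^2 + (16:ℝ)*c^5*A12^2 + (-16:ℝ)*c^5*A11*A33 + (-16:ℝ)*c^5*A11*A22) := ⟨_, rfl⟩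
  obtain ⟨x10_6, hx10_6⟩ : ∃ x : ℝ, x = ((-1/2:ℝ) + (5:ℝ)*A13^2 + (-5:ℝ)*A12^2 + (-5:ℝ)*A11*A33 + (5:ℝ)*A11*A22 + (5:ℝ)*c*A23^2 + (-5:ℝ)*c*A22*A33 + (25:ℝ)*c*A13^2 + (25:ℝ)*c*A12^2 + (-25:ℝ)*c*A11*A33 + (-25:ℝ)*c*A11*A22 + (13/2:ℝ)*c^2 + (-40:ℝ)*c^2*A13^2 + (40:ℝ)*c^2*A12^2 + (40:ℝ)*c^2*A11*A33 + (-40:ℝ)*c^2*A11*A22 + (-20:ℝ)*c^3*A23^2 + (20:ℝ)*c^3*A22*A33 + (-100:ℝ)*c^3*A13^2 + (-100:ℝ)*c^3*A12^2 + (100:ℝ)*c^3*A11*A33 + (100:ℝ)*c^3*A11*A22 + (-14:ℝ)*c^4 + (40:ℝ)*c^4*A13^2 + (-40:ℝ)*c^4*A12^2 + (-40:ℝ)*c^4*A11*A33 + (40:ℝ)*c^4*A11*A22 + (16:ℝ)*c^5*A23^2 + (-16:ℝ)*c^5*A22*A33 + (80:ℝ)*c^5*A13^2 + (80:ℝ)*c^5*A12^2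 + (-80:ℝ)*c^5*A11*A33 + (-80:ℝ)*c^5*A11*A22 + (8:ℝ)*c^6) := ⟨_, rfl⟩
  obtain ⟨x10_7, hx10_7⟩ : ∃ x : ℝ, x = ((1/2:ℝ)*A11 + (-5:ℝ)*c*A13^2*A22 + (10:ℝ)*c*A12*A13*A23 + (-5:ℝ)*c*A12^2*A33 + (-5:ℝ)*c*A11*A23^2 + (5:ℝ)*c*A11*A22*A33 + (-13/2:ℝ)*c^2*A11 + (20:ℝ)*c^3*A13^2*A22 + (-40:ℝ)*c^3*A12*A13*A23 + (20:ℝ)*c^3*A12^2*A33 + (20:ℝ)*c^3*A11*A23^2 + (-20:ℝ)*c^3*A11*A22*A33 + (14:ℝ)*c^4*A11 + (-16:ℝ)*c^5*A13^2*A22 + (32:ℝ)*c^5*A12*A13*A23 + (-16:ℝ)*c^5*A12^2*A33 + (-16:ℝ)*c^5*A11*A23^2 + (16:ℝ)*c^5*A11*A22*A33 + (-8:ℝ)*c^6*A11) := ⟨_, rfl⟩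
  have hDF : D = Fm a b x0_0 x0_1 x0_2 x0_3 x0_4 x0_5 x0_6 x0_7 := by
    funext l
    rw [hD]; simp only [Fm]; rw [hx0_0, hx0_1, hx0_2, hx0_3, hx0_4, hx0_5, hx0_6, hx0_7]; ring
  rw [hDF]
  have e1 : deriv (Fm a b x0_0 x0_1 x0_2 x0_3 x0_4 x0_5 x0_6 x0_7) = Fm a b x1_0 x1_1 x1_2 x1_3 x1_4 x1_5 x1_6 x1_7 :=
    stepF' a b ha0 hb0 _ _ _ _ _ _ _ _ _ _ _ _ _ _ _ _
      (by rw [hx1_0, hx0_1, hx0_2, hx0_4]; ring)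
      (by rw [hx1_1, hx0_3, hx0_5]; ring)
      (by rw [hx1_2, hx0_3, hx0_0, hx0_6]; linear_combination (((1:ℝ))) * ha2)
      (by rw [hx1_3, hx0_1, hx0_7]; linear_combination (((-1:ℝ)*A11)) * ha2)
      (by rw [hx1_4, hx0_5, hx0_0, hx0_6]; linear_combination (((-1:ℝ))) * hb2)
      (by rw [hx1_5, hx0_1, hx0_7]; linear_combination ((A11)) * hb2)
      (by rw [hx1_6, hx0_7, hx0_2, hx0_4]; linear_combination (((-1:ℝ)*A33)) * ha2 + ((A22)) * hb2)
      (by rw [hx1_7, hx0_3, hx0_5]; linear_combination (((-1:ℝ)*A13^2 + A11*A33)) * ha2 + ((A12^2 + (-1:ℝ)*A11*A22)) * hb2)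
  have e2 : deriv (Fm a b x1_0 x1_1 x1_2 x1_3 x1_4 x1_5 x1_6 x1_7) = Fm a b x2_0 x2_1 x2_2 x2_3 x2_4 x2_5 x2_6 x2_7 :=
    stepF' a b ha0 hb0 _ _ _ _ _ _ _ _ _ _ _ _ _ _ _ _
      (by rw [hx2_0, hx1_1, hx1_2, hx1_4]; ring)
      (by rw [hx2_1, hx1_3, hx1_5]; ring)
      (by rw [hx2_2, hx1_3, hx1_0, hx1_6]; linear_combination (((-1:ℝ)*A33 + (-1:ℝ)*A22 + (-1:ℝ)*A11)) * ha2)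
      (by rw [hx2_3, hx1_1, hx1_7]; linear_combination (((-1:ℝ)*A13^2 + (-1:ℝ)*A12^2 + A11*A33 + A11*A22)) * ha2)
      (by rw [hx2_4, hx1_5, hx1_0, hx1_6]; linear_combination ((A33 + A22 + A11)) * hb2)
      (by rw [hx2_5, hx1_1, hx1_7]; linear_combination ((A13^2 + A12^2 + (-1:ℝ)*A11*A33 + (-1:ℝ)*A11*A22)) * hb2)
      (by rw [hx2_6, hx1_7, hx1_2, hx1_4]; linear_combination (((1/2:ℝ) + (-1:ℝ)*A23^2 + A22*A33 + (-1:ℝ)*A13^2 + A11*A33 + (-1/2:ℝ)*c)) * ha2 + (((1/2:ℝ) + A23^2 + (-1:ℝ)*A22*A33 + A12^2 + (-1:ℝ)*A11*A22 + (1/2:ℝ)*c)) * hb2)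
      (by rw [hx2_7, hx1_3, hx1_5]; linear_combination ((A13^2*A22 + (-2:ℝ)*A12*A13*A23 + A12^2*A33 + (-1/2:ℝ)*A11 + A11*A23^2 + (-1:ℝ)*A11*A22*A33 + (1/2:ℝ)*c*A11)) * ha2 + (((-1:ℝ)*A13^2*A22 + (2:ℝ)*A12*A13*A23 + (-1:ℝ)*A12^2*A33 + (-1/2:ℝ)*A11 + (-1:ℝ)*A11*A23^2 + A11*A22*A33 + (-1/2:ℝ)*c*A11)) * hb2)
  have e3 : deriv (Fm a b x2_0 x2_1 x2_2 x2_3 x2_4 x2_5 x2_6 x2_7) = Fm a b x3_0 x3_1 x3_2 x3_3 x3_4 x3_5 x3_6 x3_7 :=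
    stepF' a b ha0 hb0 _ _ _ _ _ _ _ _ _ _ _ _ _ _ _ _
      (by rw [hx3_0, hx2_1, hx2_2, hx2_4]; ring)
      (by rw [hx3_1, hx2_3, hx2_5]; ring)
      (by rw [hx3_2, hx2_3, hx2_0, hx2_6]; linear_combination (((-2:ℝ)*A23^2 + (2:ℝ)*A22*A33 + (-2:ℝ)*A13^2 + (-2:ℝ)*A12^2 + (2:ℝ)*A11*A33 + (2:ℝ)*A11*A22 + (-1:ℝ)*c)) * ha2)
      (by rw [hx3_3, hx2_1, hx2_7]; linear_combination (((2:ℝ)*A13^2*A22 + (-4:ℝ)*A12*A13*A23 + (2:ℝ)*A12^2*A33 + (2:ℝ)*A11*A23^2 + (-2:ℝ)*A11*A22*A33 + c*A11)) * ha2)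
      (by rw [hx3_4, hx2_5, hx2_0, hx2_6]; linear_combination (((2:ℝ)*A23^2 + (-2:ℝ)*A22*A33 + (2:ℝ)*A13^2 + (2:ℝ)*A12^2 + (-2:ℝ)*A11*A33 + (-2:ℝ)*A11*A22 + c)) * hb2)
      (by rw [hx3_5, hx2_1, hx2_7]; linear_combination (((-2:ℝ)*A13^2*A22 + (4:ℝ)*A12*A13*A23 + (-2:ℝ)*A12^2*A33 + (-2:ℝ)*A11*A23^2 + (2:ℝ)*A11*A22*A33 + (-1:ℝ)*c*A11)) * hb2)
      (by rw [hx3_6, hx2_7, hx2_2, hx2_4]; linear_combination (((-1:ℝ)*A22 + (2:ℝ)*A13^2*A22 + (-4:ℝ)*A12*A13*A23 + (2:ℝ)*A12^2*A33 + (-1:ℝ)*A11 + (2:ℝ)*A11*A23^2 + (-2:ℝ)*A11*A22*A33 + c*A33 + c*A22 + c*A11)) * ha2 + (((-1:ℝ)*A33 + (-2:ℝ)*A13^2*A22 + (4:ℝ)*A12*A13*A23 + (-2:ℝ)*A12^2*A33 + (-1:ℝ)*A11 + (-2:ℝ)*A11*A23^2 + (2:ℝ)*A11*A22*A33 + (-1:ℝ)*c*A33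 + (-1:ℝ)*c*A22 + (-1:ℝ)*c*A11)) * hb2)
      (by rw [hx3_7, hx2_3, hx2_5]; linear_combination (((-1:ℝ)*A12^2 + A11*A22 + c*A13^2 + c*A12^2 + (-1:ℝ)*c*A11*A33 + (-1:ℝ)*c*A11*A22)) * ha2 + (((-1:ℝ)*A13^2 + A11*A33 + (-1:ℝ)*c*A13^2 + (-1:ℝ)*c*A12^2 + c*A11*A33 + c*A11*A22)) * hb2)
  have e4 : deriv (Fm a b x3_0 x3_1 x3_2 x3_3 x3_4 x3_5 x3_6 x3_7) = Fm a b x4_0 x4_1 x4_2 x4_3 x4_4 x4_5 x4_6 x4_7 :=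
    stepF' a b ha0 hb0 _ _ _ _ _ _ _ _ _ _ _ _ _ _ _ _
      (by rw [hx4_0, hx3_1, hx3_2, hx3_4]; ring)
      (by rw [hx4_1, hx3_3, hx3_5]; ring)
      (by rw [hx4_2, hx3_3, hx3_0, hx3_6]; linear_combination ((A33 + (-1:ℝ)*A22 + (6:ℝ)*A13^2*A22 + (-12:ℝ)*A12*A13*A23 + (6:ℝ)*A12^2*A33 + (6:ℝ)*A11*A23^2 + (-6:ℝ)*A11*A22*A33 + (2:ℝ)*c*A33 + (2:ℝ)*c*A22 + (3:ℝ)*c*A11)) * ha2)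
      (by rw [hx4_3, hx3_1, hx3_7]; linear_combination ((A13^2 + (-1:ℝ)*A12^2 + (-1:ℝ)*A11*A33 + A11*A22 + (2:ℝ)*c*A13^2 + (2:ℝ)*c*A12^2 + (-2:ℝ)*c*A11*A33 + (-2:ℝ)*c*A11*A22)) * ha2)
      (by rw [hx4_4, hx3_5, hx3_0, hx3_6]; linear_combination (((-1:ℝ)*A33 + A22 + (-6:ℝ)*A13^2*A22 + (12:ℝ)*A12*A13*A23 + (-6:ℝ)*A12^2*A33 + (-6:ℝ)*A11*A23^2 + (6:ℝ)*A11*A22*A33 + (-2:ℝ)*c*A33 + (-2:ℝ)*c*A22 + (-3:ℝ)*c*A11)) * hb2)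
      (by rw [hx4_5, hx3_1, hx3_7]; linear_combination (((-1:ℝ)*A13^2 + A12^2 + A11*A33 + (-1:ℝ)*A11*A22 + (-2:ℝ)*c*A13^2 + (-2:ℝ)*c*A12^2 + (2:ℝ)*c*A11*A33 + (2:ℝ)*c*A11*A22)) * hb2)
      (by rw [hx4_6, hx3_7, hx3_2, hx3_4]; linear_combination (((-1/2:ℝ) + (-1:ℝ)*A23^2 + A22*A33 + (-3:ℝ)*A12^2 + (3:ℝ)*A11*A22 + (-1/2:ℝ)*c + (2:ℝ)*c*A23^2 + (-2:ℝ)*c*A22*A33 + (3:ℝ)*c*A13^2 + (3:ℝ)*c*A12^2 + (-3:ℝ)*c*A11*A33 + (-3:ℝ)*c*A11*A22 + c^2)) * ha2 + (((1/2:ℝ) + (-1:ℝ)*A23^2 + A22*A33 + (-3:ℝ)*A13^2 + (3:ℝ)*A11*A33 + (-1/2:ℝ)*c + (-2:ℝ)*c*A23^2 + (2:ℝ)*c*A22*A33 + (-3:ℝ)*c*A13^2 + (-3:ℝ)*c*A12^2 + (3:ℝ)*c*A11*A33 + (3:ℝ)*c*A11*A22 + (-1:ℝ)*c^2)) * hb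2)
      (by rw [hx4_7, hx3_3, hx3_5]; linear_combination ((A13^2*A22 + (-2:ℝ)*A12*A13*A23 + A12^2*A33 + (1/2:ℝ)*A11 + A11*A23^2 + (-1:ℝ)*A11*A22*A33 + (-2:ℝ)*c*A13^2*A22 + (4:ℝ)*c*A12*A13*A23 + (-2:ℝ)*c*A12^2*A33 + (1/2:ℝ)*c*A11 + (-2:ℝ)*c*A11*A23^2 + (2:ℝ)*c*A11*A22*A33 + (-1:ℝ)*c^2*A11)) * ha2 + ((A13^2*A22 + (-2:ℝ)*A12*A13*A23 + A12^2*A33 + (-1/2:ℝ)*A11 + A11*A23^2 + (-1:ℝ)*A11*A22*A33 + (2:ℝ)*c*A13^2*A22 + (-4:ℝ)*c*A12*A13*A23 + (2:ℝ)*c*A12^2*A33 + (1/2:ℝ)*c*A11 + (2:ℝ)*c*A11*A23^2 + (-2:ℝ)*c*A11*A22*A33 + c^2*A11)) * hb2)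
  have e5 : deriv (Fm a b x4_0 x4_1 x4_2 x4_3 x4_4 x4_5 x4_6 x4_7) = Fm a b x5_0 x5_1 x5_2 x5_3 x5_4 x5_5 x5_6 x5_7 :=
    stepF' a b ha0 hb0 _ _ _ _ _ _ _ _ _ _ _ _ _ _ _ _
      (by rw [hx5_0, hx4_1, hx4_2, hx4_4]; ring)
      (by rw [hx5_1, hx4_3, hx4_5]; ring)
      (by rw [hx5_2, hx4_3, hx4_0, hx4_6]; linear_combination (((-1:ℝ) + (4:ℝ)*A13^2 + (-4:ℝ)*A12^2 + (-4:ℝ)*A11*A33 + (4:ℝ)*A11*A22 + (4:ℝ)*c*A23^2 + (-4:ℝ)*c*A22*A33 + (8:ℝ)*c*A13^2 + (8:ℝ)*c*A12^2 + (-8:ℝ)*c*A11*A33 + (-8:ℝ)*c*A11*A22 + (2:ℝ)*c^2)) * ha2)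
      (by rw [hx5_3, hx4_1, hx4_7]; linear_combination ((A11 + (-4:ℝ)*c*A13^2*A22 + (8:ℝ)*c*A12*A13*A23 + (-4:ℝ)*c*A12^2*A33 + (-4:ℝ)*c*A11*A23^2 + (4:ℝ)*c*A11*A22*A33 + (-2:ℝ)*c^2*A11)) * ha2)
      (by rw [hx5_4, hx4_5, hx4_0, hx4_6]; linear_combination (((1:ℝ) + (-4:ℝ)*A13^2 + (4:ℝ)*A12^2 + (4:ℝ)*A11*A33 + (-4:ℝ)*A11*A22 + (-4:ℝ)*c*A23^2 + (4:ℝ)*c*A22*A33 + (-8:ℝ)*c*A13^2 + (-8:ℝ)*c*A12^2 + (8:ℝ)*c*A11*A33 + (8:ℝ)*c*A11*A22 + (-2:ℝ)*c^2)) * hb2)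
      (by rw [hx5_5, hx4_1, hx4_7]; linear_combination (((-1:ℝ)*A11 + (4:ℝ)*c*A13^2*A22 + (-8:ℝ)*c*A12*A13*A23 + (4:ℝ)*c*A12^2*A33 + (4:ℝ)*c*A11*A23^2 + (-4:ℝ)*c*A11*A22*A33 + (2:ℝ)*c^2*A11)) * hb2)
      (by rw [hx5_6, hx4_7, hx4_2, hx4_4]; linear_combination ((A33 + (4:ℝ)*A13^2*A22 + (-8:ℝ)*A12*A13*A23 + (4:ℝ)*A12^2*A33 + (2:ℝ)*A11 + (4:ℝ)*A11*A23^2 + (-4:ℝ)*A11*A22*A33 + (2:ℝ)*c*A22 + (-8:ℝ)*c*A13^2*A22 + (16:ℝ)*c*A12*A13*A23 + (-8:ℝ)*c*A12^2*A33 + (2:ℝ)*c*A11 + (-8:ℝ)*c*A11*A23^2 + (8:ℝ)*c*A11*A22*A33 + (-2:ℝ)*c^2*A33 + (-2:ℝ)*c^2*A22 + (-4:ℝ)*c^2*A11)) * ha2 + (((-1:ℝ)*A22 + (4:ℝ)*A13^2*A22 + (-8:ℝ)*A12*A13*A23 + (4:ℝ)*A12^2*A33 + (-2:ℝ)*A11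 + (4:ℝ)*A11*A23^2 + (-4:ℝ)*A11*A22*A33 + (2:ℝ)*c*A33 + (8:ℝ)*c*A13^2*A22 + (-16:ℝ)*c*A12*A13*A23 + (8:ℝ)*c*A12^2*A33 + (2:ℝ)*c*A11 + (8:ℝ)*c*A11*A23^2 + (-8:ℝ)*c*A11*A22*A33 + (2:ℝ)*c^2*A33 + (2:ℝ)*c^2*A22 + (4:ℝ)*c^2*A11)) * hb2)
      (by rw [hx5_7, hx4_3, hx4_5]; linear_combination ((A13^2 + (-1:ℝ)*A11*A33 + (2:ℝ)*c*A12^2 + (-2:ℝ)*c*A11*A22 + (-2:ℝ)*c^2*A13^2 + (-2:ℝ)*c^2*A12^2 + (2:ℝ)*c^2*A11*A33 + (2:ℝ)*c^2*A11*A22)) * ha2 + (((-1:ℝ)*A12^2 + A11*A22 + (2:ℝ)*c*A13^2 + (-2:ℝ)*c*A11*A33 + (2:ℝ)*c^2*A13^2 + (2:ℝ)*c^2*A12^2 + (-2:ℝ)*c^2*A11*A33 + (-2:ℝ)*c^2*A11*A22)) * hb2)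
  have e6 : deriv (Fm a b x5_0 x5_1 x5_2 x5_3 x5_4 x5_5 x5_6 x5_7) = Fm a b x6_0 x6_1 x6_2 x6_3 x6_4 x6_5 x6_6 x6_7 :=
    stepF' a b ha0 hb0 _ _ _ _ _ _ _ _ _ _ _ _ _ _ _ _
      (by rw [hx6_0, hx5_1, hx5_2, hx5_4]; ring)
      (by rw [hx6_1, hx5_3, hx5_5]; ring)
      (by rw [hx6_2, hx5_3, hx5_0, hx5_6]; linear_combination ((A33 + A22 + (5:ℝ)*A11 + (-2:ℝ)*c*A33 + (2:ℝ)*c*A22 + (-20:ℝ)*c*A13^2*A22 + (40:ℝ)*c*A12*A13*A23 + (-20:ℝ)*c*A12^2*A33 + (-20:ℝ)*c*A11*A23^2 + (20:ℝ)*c*A11*A22*A33 + (-4:ℝ)*c^2*A33 + (-4:ℝ)*c^2*A22 + (-10:ℝ)*c^2*A11)) * ha2)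
      (by rw [hx6_3, hx5_1, hx5_7]; linear_combination ((A13^2 + A12^2 + (-1:ℝ)*A11*A33 + (-1:ℝ)*A11*A22 + (-2:ℝ)*c*A13^2 + (2:ℝ)*c*A12^2 + (2:ℝ)*c*A11*A33 + (-2:ℝ)*c*A11*A22 + (-4:ℝ)*c^2*A13^2 + (-4:ℝ)*c^2*A12^2 + (4:ℝ)*c^2*A11*A33 + (4:ℝ)*c^2*A11*A22)) * ha2)
      (by rw [hx6_4, hx5_5, hx5_0, hx5_6]; linear_combination (((-1:ℝ)*A33 + (-1:ℝ)*A22 + (-5:ℝ)*A11 + (2:ℝ)*c*A33 + (-2:ℝ)*c*A22 + (20:ℝ)*c*A13^2*A22 + (-40:ℝ)*c*A12*A13*A23 + (20:ℝ)*c*A12^2*A33 + (20:ℝ)*c*A11*A23^2 + (-20:ℝ)*c*A11*A22*A33 + (4:ℝ)*c^2*A33 + (4:ℝ)*c^2*A22 + (10:ℝ)*c^2*A11)) * hb2)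
      (by rw [hx6_5, hx5_1, hx5_7]; linear_combination (((-1:ℝ)*A13^2 + (-1:ℝ)*A12^2 + A11*A33 + A11*A22 + (2:ℝ)*c*A13^2 + (-2:ℝ)*c*A12^2 + (-2:ℝ)*c*A11*A33 + (2:ℝ)*c*A11*A22 + (4:ℝ)*c^2*A13^2 + (4:ℝ)*c^2*A12^2 + (-4:ℝ)*c^2*A11*A33 + (-4:ℝ)*c^2*A11*A22)) * hb2)
      (by rw [hx6_6, hx5_7, hx5_2, hx5_4]; linear_combination (((-1/2:ℝ) + A23^2 + (-1:ℝ)*A22*A33 + (5:ℝ)*A13^2 + (-5:ℝ)*A11*A33 + (3/2:ℝ)*c + (2:ℝ)*c*A23^2 + (-2:ℝ)*c*A22*A33 + (10:ℝ)*c*A12^2 + (-10:ℝ)*c*A11*A22 + c^2 + (-4:ℝ)*c^2*A23^2 + (4:ℝ)*c^2*A22*A33 + (-10:ℝ)*c^2*A13^2 + (-10:ℝ)*c^2*A12^2 + (10:ℝ)*c^2*A11*A33 + (10:ℝ)*c^2*A11*A22 + (-2:ℝ)*c^3)) * ha2 + (((-1/2:ℝ) + (-1:ℝ)*A23^2 +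 A22*A33 + (-5:ℝ)*A12^2 + (5:ℝ)*A11*A22 + (-3/2:ℝ)*c + (2:ℝ)*c*A23^2 + (-2:ℝ)*c*A22*A33 + (10:ℝ)*c*A13^2 + (-10:ℝ)*c*A11*A33 + c^2 + (4:ℝ)*c^2*A23^2 + (-4:ℝ)*c^2*A22*A33 + (10:ℝ)*c^2*A13^2 + (10:ℝ)*c^2*A12^2 + (-10:ℝ)*c^2*A11*A33 + (-10:ℝ)*c^2*A11*A22 + (2:ℝ)*c^3)) * hb2)
      (by rw [hx6_7, hx5_3, hx5_5]; linear_combination (((-1:ℝ)*A13^2*A22 + (2:ℝ)*A12*A13*A23 + (-1:ℝ)*A12^2*A33 + (1/2:ℝ)*A11 + (-1:ℝ)*A11*A23^2 + A11*A22*A33 + (-2:ℝ)*c*A13^2*A22 + (4:ℝ)*c*A12*A13*A23 + (-2:ℝ)*c*A12^2*A33 + (-3/2:ℝ)*c*A11 + (-2:ℝ)*c*A11*A23^2 + (2:ℝ)*c*A11*A22*A33 + (4:ℝ)*c^2*A13^2*A22 + (-8:ℝ)*c^2*A12*A13*A23 + (4:ℝ)*c^2*A12^2*A33 + (-1:ℝ)*c^2*A11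 + (4:ℝ)*c^2*A11*A23^2 + (-4:ℝ)*c^2*A11*A22*A33 + (2:ℝ)*c^3*A11)) * ha2 + ((A13^2*A22 + (-2:ℝ)*A12*A13*A23 + A12^2*A33 + (1/2:ℝ)*A11 + A11*A23^2 + (-1:ℝ)*A11*A22*A33 + (-2:ℝ)*c*A13^2*A22 + (4:ℝ)*c*A12*A13*A23 + (-2:ℝ)*c*A12^2*A33 + (3/2:ℝ)*c*A11 + (-2:ℝ)*c*A11*A23^2 + (2:ℝ)*c*A11*A22*A33 + (-4:ℝ)*c^2*A13^2*A22 + (8:ℝ)*c^2*A12*A13*A23 + (-4:ℝ)*c^2*A12^2*A33 + (-1:ℝ)*c^2*A11 + (-4:ℝ)*c^2*A11*A23^2 + (4:ℝ)*c^2*A11*A22*A33 + (-2:ℝ)*c^3*A11)) * hb2)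
  have e7 : deriv (Fm a b x6_0 x6_1 x6_2 x6_3 x6_4 x6_5 x6_6 x6_7) = Fm a b x7_0 x7_1 x7_2 x7_3 x7_4 x7_5 x7_6 x7_7 :=
    stepF' a b ha0 hb0 _ _ _ _ _ _ _ _ _ _ _ _ _ _ _ _
      (by rw [hx7_0, hx6_1, hx6_2, hx6_4]; ring)
      (by rw [hx7_1, hx6_3, hx6_5]; ring)
      (by rw [hx7_2, hx6_3, hx6_0, hx6_6]; linear_combination (((2:ℝ)*A23^2 + (-2:ℝ)*A22*A33 + (6:ℝ)*A13^2 + (6:ℝ)*A12^2 + (-6:ℝ)*A11*A33 + (-6:ℝ)*A11*A22 + (3:ℝ)*c + (-12:ℝ)*c*A13^2 + (12:ℝ)*c*A12^2 + (12:ℝ)*c*A11*A33 + (-12:ℝ)*c*A11*A22 + (-8:ℝ)*c^2*A23^2 + (8:ℝ)*c^2*A22*A33 + (-24:ℝ)*c^2*A13^2 + (-24:ℝ)*c^2*A12^2 + (24:ℝ)*c^2*A11*A33 + (24:ℝ)*c^2*A11*A22 + (-4:ℝ)*c^3)) * ha2)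
      (by rw [hx7_3, hx6_1, hx6_7]; linear_combination (((-2:ℝ)*A13^2*A22 + (4:ℝ)*A12*A13*A23 + (-2:ℝ)*A12^2*A33 + (-2:ℝ)*A11*A23^2 + (2:ℝ)*A11*A22*A33 + (-3:ℝ)*c*A11 + (8:ℝ)*c^2*A13^2*A22 + (-16:ℝ)*c^2*A12*A13*A23 + (8:ℝ)*c^2*A12^2*A33 + (8:ℝ)*c^2*A11*A23^2 + (-8:ℝ)*c^2*A11*A22*A33 + (4:ℝ)*c^3*A11)) * ha2)
      (by rw [hx7_4, hx6_5, hx6_0, hx6_6]; linear_combination (((-2:ℝ)*A23^2 + (2:ℝ)*A22*A33 + (-6:ℝ)*A13^2 + (-6:ℝ)*A12^2 + (6:ℝ)*A11*A33 + (6:ℝ)*A11*A22 + (-3:ℝ)*c + (12:ℝ)*c*A13^2 + (-12:ℝ)*c*A12^2 + (-12:ℝ)*c*A11*A33 + (12:ℝ)*c*A11*A22 + (8:ℝ)*c^2*A23^2 + (-8:ℝ)*c^2*A22*A33 + (24:ℝ)*c^2*A13^2 + (24:ℝ)*c^2*A12^2 + (-24:ℝ)*c^2*A11*A33 + (-24:ℝ)*c^2*A11*A22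 + (4:ℝ)*c^3)) * hb2)
      (by rw [hx7_5, hx6_1, hx6_7]; linear_combination (((2:ℝ)*A13^2*A22 + (-4:ℝ)*A12*A13*A23 + (2:ℝ)*A12^2*A33 + (2:ℝ)*A11*A23^2 + (-2:ℝ)*A11*A22*A33 + (3:ℝ)*c*A11 + (-8:ℝ)*c^2*A13^2*A22 + (16:ℝ)*c^2*A12*A13*A23 + (-8:ℝ)*c^2*A12^2*A33 + (-8:ℝ)*c^2*A11*A23^2 + (8:ℝ)*c^2*A11*A22*A33 + (-4:ℝ)*c^3*A11)) * hb2)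
      (by rw [hx7_6, hx6_7, hx6_2, hx6_4]; linear_combination ((A22 + (-6:ℝ)*A13^2*A22 + (12:ℝ)*A12*A13*A23 + (-6:ℝ)*A12^2*A33 + (3:ℝ)*A11 + (-6:ℝ)*A11*A23^2 + (6:ℝ)*A11*A22*A33 + (-3:ℝ)*c*A33 + (-1:ℝ)*c*A22 + (-12:ℝ)*c*A13^2*A22 + (24:ℝ)*c*A12*A13*A23 + (-12:ℝ)*c*A12^2*A33 + (-9:ℝ)*c*A11 + (-12:ℝ)*c*A11*A23^2 + (12:ℝ)*c*A11*A22*A33 + (-4:ℝ)*c^2*A22 + (24:ℝ)*c^2*A13^2*A22 + (-48:ℝ)*c^2*A12*A13*A23 + (24:ℝ)*c^2*A12^2*A33 + (-6:ℝ)*c^2*A11 + (24:ℝ)*c^2*A11*A23^2 + (-24:ℝ)*c^2*A11*A22*A33 + (4:ℝ)*c^3*A33 + (4:ℝ)*c^3*A22 + (12:ℝ)*c^3*A11)) * ha2 + ((A33 + (6:ℝ)*A13^2*A22 + (-12:ℝ)*A12*A13*A23 + (6:ℝ)*A12^2*A33 + (3:ℝ)*A11 + (6:ℝ)*A11*A23^2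 + (-6:ℝ)*A11*A22*A33 + c*A33 + (3:ℝ)*c*A22 + (-12:ℝ)*c*A13^2*A22 + (24:ℝ)*c*A12*A13*A23 + (-12:ℝ)*c*A12^2*A33 + (9:ℝ)*c*A11 + (-12:ℝ)*c*A11*A23^2 + (12:ℝ)*c*A11*A22*A33 + (-4:ℝ)*c^2*A33 + (-24:ℝ)*c^2*A13^2*A22 + (48:ℝ)*c^2*A12*A13*A23 + (-24:ℝ)*c^2*A12^2*A33 + (-6:ℝ)*c^2*A11 + (-24:ℝ)*c^2*A11*A23^2 + (24:ℝ)*c^2*A11*A22*A33 + (-4:ℝ)*c^3*A33 + (-4:ℝ)*c^3*A22 + (-12:ℝ)*c^3*A11)) * hb2)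
      (by rw [hx7_7, hx6_3, hx6_5]; linear_combination ((A12^2 + (-1:ℝ)*A11*A22 + (-3:ℝ)*c*A13^2 + (-1:ℝ)*c*A12^2 + (3:ℝ)*c*A11*A33 + c*A11*A22 + (-4:ℝ)*c^2*A12^2 + (4:ℝ)*c^2*A11*A22 + (4:ℝ)*c^3*A13^2 + (4:ℝ)*c^3*A12^2 + (-4:ℝ)*c^3*A11*A33 + (-4:ℝ)*c^3*A11*A22)) * ha2 + ((A13^2 + (-1:ℝ)*A11*A33 + c*A13^2 + (3:ℝ)*c*A12^2 + (-1:ℝ)*c*A11*A33 + (-3:ℝ)*c*A11*A22 + (-4:ℝ)*c^2*A13^2 + (4:ℝ)*c^2*A11*A33 + (-4:ℝ)*c^3*A13^2 + (-4:ℝ)*c^3*A12^2 + (4:ℝ)*c^3*A11*A33 + (4:ℝ)*c^3*A11*A22)) * hb2)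
  have e8 : deriv (Fm a b x7_0 x7_1 x7_2 x7_3 x7_4 x7_5 x7_6 x7_7) = Fm a b x8_0 x8_1 x8_2 x8_3 x8_4 x8_5 x8_6 x8_7 :=
    stepF' a b ha0 hb0 _ _ _ _ _ _ _ _ _ _ _ _ _ _ _ _
      (by rw [hx8_0, hx7_1, hx7_2, hx7_4]; ring)
      (by rw [hx8_1, hx7_3, hx7_5]; ring)
      (by rw [hx8_2, hx7_3, hx7_0, hx7_6]; linear_combination (((-1:ℝ)*A33 + A22 + (-14:ℝ)*A13^2*A22 + (28:ℝ)*A12*A13*A23 + (-14:ℝ)*A12^2*A33 + (-14:ℝ)*A11*A23^2 + (14:ℝ)*A11*A22*A33 + (-4:ℝ)*c*A33 + (-4:ℝ)*c*A22 + (-21:ℝ)*c*A11 + (4:ℝ)*c^2*A33 + (-4:ℝ)*c^2*A22 + (56:ℝ)*c^2*A13^2*A22 + (-112:ℝ)*c^2*A12*A13*A23 + (56:ℝ)*c^2*A12^2*A33 + (56:ℝ)*c^2*A11*A23^2 + (-56:ℝ)*c^2*A11*A22*A33 + (8:ℝ)*c^3*A33 + (8:ℝ)*c^3*A22 + (28:ℝ)*c^3*A11))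 * ha2)
      (by rw [hx8_3, hx7_1, hx7_7]; linear_combination (((-1:ℝ)*A13^2 + A12^2 + A11*A33 + (-1:ℝ)*A11*A22 + (-4:ℝ)*c*A13^2 + (-4:ℝ)*c*A12^2 + (4:ℝ)*c*A11*A33 + (4:ℝ)*c*A11*A22 + (4:ℝ)*c^2*A13^2 + (-4:ℝ)*c^2*A12^2 + (-4:ℝ)*c^2*A11*A33 + (4:ℝ)*c^2*A11*A22 + (8:ℝ)*c^3*A13^2 + (8:ℝ)*c^3*A12^2 + (-8:ℝ)*c^3*A11*A33 + (-8:ℝ)*c^3*A11*A22)) * ha2)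
      (by rw [hx8_4, hx7_5, hx7_0, hx7_6]; linear_combination ((A33 + (-1:ℝ)*A22 + (14:ℝ)*A13^2*A22 + (-28:ℝ)*A12*A13*A23 + (14:ℝ)*A12^2*A33 + (14:ℝ)*A11*A23^2 + (-14:ℝ)*A11*A22*A33 + (4:ℝ)*c*A33 + (4:ℝ)*c*A22 + (21:ℝ)*c*A11 + (-4:ℝ)*c^2*A33 + (4:ℝ)*c^2*A22 + (-56:ℝ)*c^2*A13^2*A22 + (112:ℝ)*c^2*A12*A13*A23 + (-56:ℝ)*c^2*A12^2*A33 + (-56:ℝ)*c^2*A11*A23^2 + (56:ℝ)*c^2*A11*A22*A33 + (-8:ℝ)*c^3*A33 + (-8:ℝ)*c^3*A22 + (-28:ℝ)*c^3*A11)) * hb2)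
      (by rw [hx8_5, hx7_1, hx7_7]; linear_combination ((A13^2 + (-1:ℝ)*A12^2 + (-1:ℝ)*A11*A33 + A11*A22 + (4:ℝ)*c*A13^2 + (4:ℝ)*c*A12^2 + (-4:ℝ)*c*A11*A33 + (-4:ℝ)*c*A11*A22 + (-4:ℝ)*c^2*A13^2 + (4:ℝ)*c^2*A12^2 + (4:ℝ)*c^2*A11*A33 + (-4:ℝ)*c^2*A11*A22 + (-8:ℝ)*c^3*A13^2 + (-8:ℝ)*c^3*A12^2 + (8:ℝ)*c^3*A11*A33 + (8:ℝ)*c^3*A11*A22)) * hb2)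
      (by rw [hx8_6, hx7_7, hx7_2, hx7_4]; linear_combination (((1/2:ℝ) + A23^2 + (-1:ℝ)*A22*A33 + (7:ℝ)*A12^2 + (-7:ℝ)*A11*A22 + (3/2:ℝ)*c + (-4:ℝ)*c*A23^2 + (4:ℝ)*c*A22*A33 + (-21:ℝ)*c*A13^2 + (-7:ℝ)*c*A12^2 + (21:ℝ)*c*A11*A33 + (7:ℝ)*c*A11*A22 + (-4:ℝ)*c^2 + (-4:ℝ)*c^2*A23^2 + (4:ℝ)*c^2*A22*A33 + (-28:ℝ)*c^2*A12^2 + (28:ℝ)*c^2*A11*A22 + (-2:ℝ)*c^3 + (8:ℝ)*c^3*A23^2 + (-8:ℝ)*c^3*A22*A33 + (28:ℝ)*c^3*A13^2 + (28:ℝ)*c^3*A12^2 + (-28:ℝ)*c^3*A11*A33 + (-28:ℝ)*c^3*A11*A22 + (4:ℝ)*c^4)) * ha2 + (((-1/2:ℝ) + A23^2 + (-1:ℝ)*A22*A33 + (7:ℝ)*A13^2 + (-7:ℝ)*A11*A33 + (3/2:ℝ)*c + (4:ℝ)*c*A23^2 + (-4:ℝ)*c*A22*A33 + (7:ℝ)*c*A13^2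 + (21:ℝ)*c*A12^2 + (-7:ℝ)*c*A11*A33 + (-21:ℝ)*c*A11*A22 + (4:ℝ)*c^2 + (-4:ℝ)*c^2*A23^2 + (4:ℝ)*c^2*A22*A33 + (-28:ℝ)*c^2*A13^2 + (28:ℝ)*c^2*A11*A33 + (-2:ℝ)*c^3 + (-8:ℝ)*c^3*A23^2 + (8:ℝ)*c^3*A22*A33 + (-28:ℝ)*c^3*A13^2 + (-28:ℝ)*c^3*A12^2 + (28:ℝ)*c^3*A11*A33 + (28:ℝ)*c^3*A11*A22 + (-4:ℝ)*c^4)) * hb2)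
      (by rw [hx8_7, hx7_3, hx7_5]; linear_combination (((-1:ℝ)*A13^2*A22 + (2:ℝ)*A12*A13*A23 + (-1:ℝ)*A12^2*A33 + (-1/2:ℝ)*A11 + (-1:ℝ)*A11*A23^2 + A11*A22*A33 + (4:ℝ)*c*A13^2*A22 + (-8:ℝ)*c*A12*A13*A23 + (4:ℝ)*c*A12^2*A33 + (-3/2:ℝ)*c*A11 + (4:ℝ)*c*A11*A23^2 + (-4:ℝ)*c*A11*A22*A33 + (4:ℝ)*c^2*A13^2*A22 + (-8:ℝ)*c^2*A12*A13*A23 + (4:ℝ)*c^2*A12^2*A33 + (4:ℝ)*c^2*A11 + (4:ℝ)*c^2*A11*A23^2 + (-4:ℝ)*c^2*A11*A22*A33 + (-8:ℝ)*c^3*A13^2*A22 + (16:ℝ)*c^3*A12*A13*A23 + (-8:ℝ)*c^3*A12^2*A33 + (2:ℝ)*c^3*A11 + (-8:ℝ)*c^3*A11*A23^2 + (8:ℝ)*c^3*A11*A22*A33 + (-4:ℝ)*c^4*A11)) * ha2 + (((-1:ℝ)*A13^2*A22 + (2:ℝ)*A12*A13*A23 + (-1:ℝ)*A12^2*A33 +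 (1/2:ℝ)*A11 + (-1:ℝ)*A11*A23^2 + A11*A22*A33 + (-4:ℝ)*c*A13^2*A22 + (8:ℝ)*c*A12*A13*A23 + (-4:ℝ)*c*A12^2*A33 + (-3/2:ℝ)*c*A11 + (-4:ℝ)*c*A11*A23^2 + (4:ℝ)*c*A11*A22*A33 + (4:ℝ)*c^2*A13^2*A22 + (-8:ℝ)*c^2*A12*A13*A23 + (4:ℝ)*c^2*A12^2*A33 + (-4:ℝ)*c^2*A11 + (4:ℝ)*c^2*A11*A23^2 + (-4:ℝ)*c^2*A11*A22*A33 + (8:ℝ)*c^3*A13^2*A22 + (-16:ℝ)*c^3*A12*A13*A23 + (8:ℝ)*c^3*A12^2*A33 + (2:ℝ)*c^3*A11 + (8:ℝ)*c^3*A11*A23^2 + (-8:ℝ)*c^3*A11*A22*A33 + (4:ℝ)*c^4*A11)) * hb2)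
  have e9 : deriv (Fm a b x8_0 x8_1 x8_2 x8_3 x8_4 x8_5 x8_6 x8_7) = Fm a b x9_0 x9_1 x9_2 x9_3 x9_4 x9_5 x9_6 x9_7 :=
    stepF' a b ha0 hb0 _ _ _ _ _ _ _ _ _ _ _ _ _ _ _ _
      (by rw [hx9_0, hx8_1, hx8_2, hx8_4]; ring)
      (by rw [hx9_1, hx8_3, hx8_5]; ring)
      (by rw [hx9_2, hx8_3, hx8_0, hx8_6]; linear_combination (((1:ℝ) + (-8:ℝ)*A13^2 + (8:ℝ)*A12^2 + (8:ℝ)*A11*A33 + (-8:ℝ)*A11*A22 + (-8:ℝ)*c*A23^2 + (8:ℝ)*c*A22*A33 + (-32:ℝ)*c*A13^2 + (-32:ℝ)*c*A12^2 + (32:ℝ)*c*A11*A33 + (32:ℝ)*c*A11*A22 + (-8:ℝ)*c^2 + (32:ℝ)*c^2*A13^2 + (-32:ℝ)*c^2*A12^2 + (-32:ℝ)*c^2*A11*A33 + (32:ℝ)*c^2*A11*A22 + (16:ℝ)*c^3*A23^2 + (-16:ℝ)*c^3*A22*A33 + (64:ℝ)*c^3*A13^2 + (64:ℝ)*c^3*A12^2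 + (-64:ℝ)*c^3*A11*A33 + (-64:ℝ)*c^3*A11*A22 + (8:ℝ)*c^4)) * ha2)
      (by rw [hx9_3, hx8_1, hx8_7]; linear_combination (((-1:ℝ)*A11 + (8:ℝ)*c*A13^2*A22 + (-16:ℝ)*c*A12*A13*A23 + (8:ℝ)*c*A12^2*A33 + (8:ℝ)*c*A11*A23^2 + (-8:ℝ)*c*A11*A22*A33 + (8:ℝ)*c^2*A11 + (-16:ℝ)*c^3*A13^2*A22 + (32:ℝ)*c^3*A12*A13*A23 + (-16:ℝ)*c^3*A12^2*A33 + (-16:ℝ)*c^3*A11*A23^2 + (16:ℝ)*c^3*A11*A22*A33 + (-8:ℝ)*c^4*A11)) * ha2)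
      (by rw [hx9_4, hx8_5, hx8_0, hx8_6]; linear_combination (((-1:ℝ) + (8:ℝ)*A13^2 + (-8:ℝ)*A12^2 + (-8:ℝ)*A11*A33 + (8:ℝ)*A11*A22 + (8:ℝ)*c*A23^2 + (-8:ℝ)*c*A22*A33 + (32:ℝ)*c*A13^2 + (32:ℝ)*c*A12^2 + (-32:ℝ)*c*A11*A33 + (-32:ℝ)*c*A11*A22 + (8:ℝ)*c^2 + (-32:ℝ)*c^2*A13^2 + (32:ℝ)*c^2*A12^2 + (32:ℝ)*c^2*A11*A33 + (-32:ℝ)*c^2*A11*A22 + (-16:ℝ)*c^3*A23^2 + (16:ℝ)*c^3*A22*A33 + (-64:ℝ)*c^3*A13^2 + (-64:ℝ)*c^3*A12^2 + (64:ℝ)*c^3*A11*A33 + (64:ℝ)*c^3*A11*A22 + (-8:ℝ)*c^4)) * hb2)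
      (by rw [hx9_5, hx8_1, hx8_7]; linear_combination ((A11 + (-8:ℝ)*c*A13^2*A22 + (16:ℝ)*c*A12*A13*A23 + (-8:ℝ)*c*A12^2*A33 + (-8:ℝ)*c*A11*A23^2 + (8:ℝ)*c*A11*A22*A33 + (-8:ℝ)*c^2*A11 + (16:ℝ)*c^3*A13^2*A22 + (-32:ℝ)*c^3*A12*A13*A23 + (16:ℝ)*c^3*A12^2*A33 + (16:ℝ)*c^3*A11*A23^2 + (-16:ℝ)*c^3*A11*A22*A33 + (8:ℝ)*c^4*A11)) * hb2)
      (by rw [hx9_6, hx8_7, hx8_2, hx8_4]; linear_combination (((-1:ℝ)*A33 + (-8:ℝ)*A13^2*A22 + (16:ℝ)*A12*A13*A23 + (-8:ℝ)*A12^2*A33 + (-4:ℝ)*A11 + (-8:ℝ)*A11*A23^2 + (8:ℝ)*A11*A22*A33 + (-4:ℝ)*c*A22 + (32:ℝ)*c*A13^2*A22 + (-64:ℝ)*c*A12*A13*A23 + (32:ℝ)*c*A12^2*A33 + (-12:ℝ)*c*A11 + (32:ℝ)*c*A11*A23^2 + (-32:ℝ)*c*A11*A22*A33 + (8:ℝ)*c^2*A33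 + (4:ℝ)*c^2*A22 + (32:ℝ)*c^2*A13^2*A22 + (-64:ℝ)*c^2*A12*A13*A23 + (32:ℝ)*c^2*A12^2*A33 + (32:ℝ)*c^2*A11 + (32:ℝ)*c^2*A11*A23^2 + (-32:ℝ)*c^2*A11*A22*A33 + (8:ℝ)*c^3*A22 + (-64:ℝ)*c^3*A13^2*A22 + (128:ℝ)*c^3*A12*A13*A23 + (-64:ℝ)*c^3*A12^2*A33 + (16:ℝ)*c^3*A11 + (-64:ℝ)*c^3*A11*A23^2 + (64:ℝ)*c^3*A11*A22*A33 + (-8:ℝ)*c^4*A33 + (-8:ℝ)*c^4*A22 + (-32:ℝ)*c^4*A11)) * ha2 + ((A22 + (-8:ℝ)*A13^2*A22 + (16:ℝ)*A12*A13*A23 + (-8:ℝ)*A12^2*A33 + (4:ℝ)*A11 + (-8:ℝ)*A11*A23^2 + (8:ℝ)*A11*A22*A33 + (-4:ℝ)*c*A33 + (-32:ℝ)*c*A13^2*A22 + (64:ℝ)*c*A12*A13*A23 + (-32:ℝ)*c*A12^2*A33 + (-12:ℝ)*c*A11 + (-32:ℝ)*c*A11*A23^2 + (32:ℝ)*c*A11*A22*A33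 + (-4:ℝ)*c^2*A33 + (-8:ℝ)*c^2*A22 + (32:ℝ)*c^2*A13^2*A22 + (-64:ℝ)*c^2*A12*A13*A23 + (32:ℝ)*c^2*A12^2*A33 + (-32:ℝ)*c^2*A11 + (32:ℝ)*c^2*A11*A23^2 + (-32:ℝ)*c^2*A11*A22*A33 + (8:ℝ)*c^3*A33 + (64:ℝ)*c^3*A13^2*A22 + (-128:ℝ)*c^3*A12*A13*A23 + (64:ℝ)*c^3*A12^2*A33 + (16:ℝ)*c^3*A11 + (64:ℝ)*c^3*A11*A23^2 + (-64:ℝ)*c^3*A11*A22*A33 + (8:ℝ)*c^4*A33 + (8:ℝ)*c^4*A22 + (32:ℝ)*c^4*A11)) * hb2)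
      (by rw [hx9_7, hx8_3, hx8_5]; linear_combination (((-1:ℝ)*A13^2 + A11*A33 + (-4:ℝ)*c*A12^2 + (4:ℝ)*c*A11*A22 + (8:ℝ)*c^2*A13^2 + (4:ℝ)*c^2*A12^2 + (-8:ℝ)*c^2*A11*A33 + (-4:ℝ)*c^2*A11*A22 + (8:ℝ)*c^3*A12^2 + (-8:ℝ)*c^3*A11*A22 + (-8:ℝ)*c^4*A13^2 + (-8:ℝ)*c^4*A12^2 + (8:ℝ)*c^4*A11*A33 + (8:ℝ)*c^4*A11*A22)) * ha2 + ((A12^2 + (-1:ℝ)*A11*A22 + (-4:ℝ)*c*A13^2 + (4:ℝ)*c*A11*A33 + (-4:ℝ)*c^2*A13^2 + (-8:ℝ)*c^2*A12^2 + (4:ℝ)*c^2*A11*A33 + (8:ℝ)*c^2*A11*A22 + (8:ℝ)*c^3*A13^2 + (-8:ℝ)*c^3*A11*A33 + (8:ℝ)*c^4*A13^2 + (8:ℝ)*c^4*A12^2 + (-8:ℝ)*c^4*A11*A33 + (-8:ℝ)*c^4*A11*A22)) * hb2)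
  have e10 : deriv (Fm a b x9_0 x9_1 x9_2 x9_3 x9_4 x9_5 x9_6 x9_7) = Fm a b x10_0 x10_1 x10_2 x10_3 x10_4 x10_5 x10_6 x10_7 :=
    stepF' a b ha0 hb0 _ _ _ _ _ _ _ _ _ _ _ _ _ _ _ _
      (by rw [hx10_0, hx9_1, hx9_2, hx9_4]; ring)
      (by rw [hx10_1, hx9_3, hx9_5]; ring)
      (by rw [hx10_2, hx9_3, hx9_0, hx9_6]; linear_combination (((-1:ℝ)*A33 + (-1:ℝ)*A22 + (-9:ℝ)*A11 + (4:ℝ)*c*A33 + (-4:ℝ)*c*A22 + (72:ℝ)*c*A13^2*A22 + (-144:ℝ)*c*A12*A13*A23 + (72:ℝ)*c*A12^2*A33 + (72:ℝ)*c*A11*A23^2 + (-72:ℝ)*c*A11*A22*A33 + (12:ℝ)*c^2*A33 + (12:ℝ)*c^2*A22 + (72:ℝ)*c^2*A11 + (-8:ℝ)*c^3*A33 + (8:ℝ)*c^3*A22 + (-144:ℝ)*c^3*A13^2*A22 + (288:ℝ)*c^3*A12*A13*A23 + (-144:ℝ)*c^3*A12^2*A33 + (-144:ℝ)*c^3*A11*A23^2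 + (144:ℝ)*c^3*A11*A22*A33 + (-16:ℝ)*c^4*A33 + (-16:ℝ)*c^4*A22 + (-72:ℝ)*c^4*A11)) * ha2)
      (by rw [hx10_3, hx9_1, hx9_7]; linear_combination (((-1:ℝ)*A13^2 + (-1:ℝ)*A12^2 + A11*A33 + A11*A22 + (4:ℝ)*c*A13^2 + (-4:ℝ)*c*A12^2 + (-4:ℝ)*c*A11*A33 + (4:ℝ)*c*A11*A22 + (12:ℝ)*c^2*A13^2 + (12:ℝ)*c^2*A12^2 + (-12:ℝ)*c^2*A11*A33 + (-12:ℝ)*c^2*A11*A22 + (-8:ℝ)*c^3*A13^2 + (8:ℝ)*c^3*A12^2 + (8:ℝ)*c^3*A11*A33 + (-8:ℝ)*c^3*A11*A22 + (-16:ℝ)*c^4*A13^2 + (-16:ℝ)*c^4*A12^2 + (16:ℝ)*c^4*A11*A33 + (16:ℝ)*c^4*A11*A22)) * ha2)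
      (by rw [hx10_4, hx9_5, hx9_0, hx9_6]; linear_combination ((A33 + A22 + (9:ℝ)*A11 + (-4:ℝ)*c*A33 + (4:ℝ)*c*A22 + (-72:ℝ)*c*A13^2*A22 + (144:ℝ)*c*A12*A13*A23 + (-72:ℝ)*c*A12^2*A33 + (-72:ℝ)*c*A11*A23^2 + (72:ℝ)*c*A11*A22*A33 + (-12:ℝ)*c^2*A33 + (-12:ℝ)*c^2*A22 + (-72:ℝ)*c^2*A11 + (8:ℝ)*c^3*A33 + (-8:ℝ)*c^3*A22 + (144:ℝ)*c^3*A13^2*A22 + (-288:ℝ)*c^3*A12*A13*A23 + (144:ℝ)*c^3*A12^2*A33 + (144:ℝ)*c^3*A11*A23^2 + (-144:ℝ)*c^3*A11*A22*A33 + (16:ℝ)*c^4*A33 + (16:ℝ)*c^4*A22 + (72:ℝ)*c^4*A11)) * hb2)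
      (by rw [hx10_5, hx9_1, hx9_7]; linear_combination ((A13^2 + A12^2 + (-1:ℝ)*A11*A33 + (-1:ℝ)*A11*A22 + (-4:ℝ)*c*A13^2 + (4:ℝ)*c*A12^2 + (4:ℝ)*c*A11*A33 + (-4:ℝ)*c*A11*A22 + (-12:ℝ)*c^2*A13^2 + (-12:ℝ)*c^2*A12^2 + (12:ℝ)*c^2*A11*A33 + (12:ℝ)*c^2*A11*A22 + (8:ℝ)*c^3*A13^2 + (-8:ℝ)*c^3*A12^2 + (-8:ℝ)*c^3*A11*A33 + (8:ℝ)*c^3*A11*A22 + (16:ℝ)*c^4*A13^2 + (16:ℝ)*c^4*A12^2 + (-16:ℝ)*c^4*A11*A33 + (-16:ℝ)*c^4*A11*A22)) * hb2)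
      (by rw [hx10_6, hx9_7, hx9_2, hx9_4]; linear_combination (((1/2:ℝ) + (-1:ℝ)*A23^2 + A22*A33 + (-9:ℝ)*A13^2 + (9:ℝ)*A11*A33 + (-5/2:ℝ)*c + (-4:ℝ)*c*A23^2 + (4:ℝ)*c*A22*A33 + (-36:ℝ)*c*A12^2 + (36:ℝ)*c*A11*A22 + (-4:ℝ)*c^2 + (12:ℝ)*c^2*A23^2 + (-12:ℝ)*c^2*A22*A33 + (72:ℝ)*c^2*A13^2 + (36:ℝ)*c^2*A12^2 + (-72:ℝ)*c^2*A11*A33 + (-36:ℝ)*c^2*A11*A22 + (10:ℝ)*c^3 + (8:ℝ)*c^3*A23^2 + (-8:ℝ)*c^3*A22*A33 + (72:ℝ)*c^3*A12^2 + (-72:ℝ)*c^3*A11*A22 + (4:ℝ)*c^4 + (-16:ℝ)*c^4*A23^2 + (16:ℝ)*c^4*A22*A33 + (-72:ℝ)*c^4*A13^2 + (-72:ℝ)*c^4*A12^2 + (72:ℝ)*c^4*A11*A33 + (72:ℝ)*c^4*A11*A22 + (-8:ℝ)*c^5)) * ha2 + (((1/2:ℝ) + A23^2 + (-1:ℝ)*A22*A33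 + (9:ℝ)*A12^2 + (-9:ℝ)*A11*A22 + (5/2:ℝ)*c + (-4:ℝ)*c*A23^2 + (4:ℝ)*c*A22*A33 + (-36:ℝ)*c*A13^2 + (36:ℝ)*c*A11*A33 + (-4:ℝ)*c^2 + (-12:ℝ)*c^2*A23^2 + (12:ℝ)*c^2*A22*A33 + (-36:ℝ)*c^2*A13^2 + (-72:ℝ)*c^2*A12^2 + (36:ℝ)*c^2*A11*A33 + (72:ℝ)*c^2*A11*A22 + (-10:ℝ)*c^3 + (8:ℝ)*c^3*A23^2 + (-8:ℝ)*c^3*A22*A33 + (72:ℝ)*c^3*A13^2 + (-72:ℝ)*c^3*A11*A33 + (4:ℝ)*c^4 + (16:ℝ)*c^4*A23^2 + (-16:ℝ)*c^4*A22*A33 + (72:ℝ)*c^4*A13^2 + (72:ℝ)*c^4*A12^2 + (-72:ℝ)*c^4*A11*A33 + (-72:ℝ)*c^4*A11*A22 + (8:ℝ)*c^5)) * hb2)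
      (by rw [hx10_7, hx9_3, hx9_5]; linear_combination ((A13^2*A22 + (-2:ℝ)*A12*A13*A23 + A12^2*A33 + (-1/2:ℝ)*A11 + A11*A23^2 + (-1:ℝ)*A11*A22*A33 + (4:ℝ)*c*A13^2*A22 + (-8:ℝ)*c*A12*A13*A23 + (4:ℝ)*c*A12^2*A33 + (5/2:ℝ)*c*A11 + (4:ℝ)*c*A11*A23^2 + (-4:ℝ)*c*A11*A22*A33 + (-12:ℝ)*c^2*A13^2*A22 + (24:ℝ)*c^2*A12*A13*A23 + (-12:ℝ)*c^2*A12^2*A33 + (4:ℝ)*c^2*A11 + (-12:ℝ)*c^2*A11*A23^2 + (12:ℝ)*c^2*A11*A22*A33 + (-8:ℝ)*c^3*A13^2*A22 + (16:ℝ)*c^3*A12*A13*A23 + (-8:ℝ)*c^3*A12^2*A33 + (-10:ℝ)*c^3*A11 + (-8:ℝ)*c^3*A11*A23^2 + (8:ℝ)*c^3*A11*A22*A33 + (16:ℝ)*c^4*A13^2*A22 + (-32:ℝ)*c^4*A12*A13*A23 + (16:ℝ)*c^4*A12^2*A33 + (-4:ℝ)*c^4*A11 + (16:ℝ)*c^4*A11*A23^2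 + (-16:ℝ)*c^4*A11*A22*A33 + (8:ℝ)*c^5*A11)) * ha2 + (((-1:ℝ)*A13^2*A22 + (2:ℝ)*A12*A13*A23 + (-1:ℝ)*A12^2*A33 + (-1/2:ℝ)*A11 + (-1:ℝ)*A11*A23^2 + A11*A22*A33 + (4:ℝ)*c*A13^2*A22 + (-8:ℝ)*c*A12*A13*A23 + (4:ℝ)*c*A12^2*A33 + (-5/2:ℝ)*c*A11 + (4:ℝ)*c*A11*A23^2 + (-4:ℝ)*c*A11*A22*A33 + (12:ℝ)*c^2*A13^2*A22 + (-24:ℝ)*c^2*A12*A13*A23 + (12:ℝ)*c^2*A12^2*A33 + (4:ℝ)*c^2*A11 + (12:ℝ)*c^2*A11*A23^2 + (-12:ℝ)*c^2*A11*A22*A33 + (-8:ℝ)*c^3*A13^2*A22 + (16:ℝ)*c^3*A12*A13*A23 + (-8:ℝ)*c^3*A12^2*A33 + (10:ℝ)*c^3*A11 + (-8:ℝ)*c^3*A11*A23^2 + (8:ℝ)*c^3*A11*A22*A33 + (-16:ℝ)*c^4*A13^2*A22 + (32:ℝ)*c^4*A12*A13*A23 + (-16:ℝ)*c^4*A12^2*A33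 + (-4:ℝ)*c^4*A11 + (-16:ℝ)*c^4*A11*A23^2 + (16:ℝ)*c^4*A11*A22*A33 + (-8:ℝ)*c^5*A11)) * hb2)
  calc
    iteratedDeriv 10 (Fm a b x0_0 x0_1 x0_2 x0_3 x0_4 x0_5 x0_6 x0_7) 0 = iteratedDeriv 9 (Fm a b x1_0 x1_1 x1_2 x1_3 x1_4 x1_5 x1_6 x1_7) 0 := by
        rw [show (10:ℕ) = 9+1 from rfl, iteratedDeriv_succ', e1]
    _ = iteratedDeriv 8 (Fm a b x2_0 x2_1 x2_2 x2_3 x2_4 x2_5 x2_6 x2_7) 0 := by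
        rw [show (9:ℕ) = 8+1 from rfl, iteratedDeriv_succ', e2]
    _ = iteratedDeriv 7 (Fm a b x3_0 x3_1 x3_2 x3_3 x3_4 x3_5 x3_6 x3_7) 0 := by
        rw [show (8:ℕ) = 7+1 from rfl, iteratedDeriv_succ', e3]
    _ = iteratedDeriv 6 (Fm a b x4_0 x4_1 x4_2 x4_3 x4_4 x4_5 x4_6 x4_7) 0 := by
        rw [show (7:ℕ) = 6+1 from rfl, iteratedDeriv_succ', e4]
    _ = iteratedDeriv 5 (Fm a b x5_0 x5_1 x5_2 x5_3 x5_4 x5_5 x5_6 x5_7) 0 := by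
        rw [show (6:ℕ) = 5+1 from rfl, iteratedDeriv_succ', e5]
    _ = iteratedDeriv 4 (Fm a b x6_0 x6_1 x6_2 x6_3 x6_4 x6_5 x6_6 x6_7) 0 := by
        rw [show (5:ℕ) = 4+1 from rfl, iteratedDeriv_succ', e6]
    _ = iteratedDeriv 3 (Fm a b x7_0 x7_1 x7_2 x7_3 x7_4 x7_5 x7_6 x7_7) 0 := by
        rw [show (4:ℕ) = 3+1 from rfl, iteratedDeriv_succ', e7]
    _ = iteratedDeriv 2 (Fm a b x8_0 x8_1 x8_2 x8_3 x8_4 x8_5 x8_6 x8_7) 0 := by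
        rw [show (3:ℕ) = 2+1 from rfl, iteratedDeriv_succ', e8]
    _ = iteratedDeriv 1 (Fm a b x9_0 x9_1 x9_2 x9_3 x9_4 x9_5 x9_6 x9_7) 0 := by
        rw [show (2:ℕ) = 1+1 from rfl, iteratedDeriv_succ', e9]
    _ = iteratedDeriv 0 (Fm a b x10_0 x10_1 x10_2 x10_3 x10_4 x10_5 x10_6 x10_7) 0 := by
        rw [show (1:ℕ) = 0+1 from rfl, iteratedDeriv_succ', e10]
    _ = _ := by
        rw [iteratedDeriv_zero]
        simp only [Fm, mul_zero, Real.cos_zero, Real.cosh_zero, Real.sin_zero,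
          Real.sinh_zero, zero_div, mul_one, zero_mul, add_zero, mul_zero]
        rw [hx10_0]; ring
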